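/- arXiv:2208.06871 — 7 statements merged into one kernel-verified Lean document; each statement's English description precedes it below -/
import Mathlib

section
/- Let H be a real Hilbert space, let T : H → H be L-Lipschitz continuous with L > 0, let {w_n} be any sequence in H, let δ_0, δ_1 > 0, r > 0, and let {c_n} be a sequence in [0, ∞) with c̄ := Σ_{n=1}^∞ c_n < ∞. Define the step sizes recursively by δ_{n+1} = min{ r‖w_n − w_{n+1}‖ / ‖T w_n − T w_{n+1}‖, δ_n + c_n } if T w_n ≠ T w_{n+1}, and δ_{n+1} = δ_n + c_n otherwise. Then the sequence {δ_n} converges to a limit δ̄ satisfying min{r/L, δ_1} ≤ δ̄ ≤ δ_1 + c̄. -/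
open Filter Topology
open scoped Classical

/-- The adaptive step sizes
`δ (n+1) = min (r‖w n − w (n+1)‖ / ‖T (w n) − T (w (n+1))‖) (δ n + c n)` (when
`T (w n) ≠ T (w (n+1))`, and `δ n + c n` otherwise) converge to some
`δ̄ ∈ [min (r/L) (δ 1), δ 1 + ∑ c_n]`, where `T` is `L`-Lipschitz. -/
theorem stmt3 {H : Type*} [NormedAddCommGroup H] [InnerProductSpace ℝ H] [CompleteSpace H]
    (T : H → H) (L : ℝ) (hL : 0 < L)
    (hTlip : ∀ a b : H, ‖T a - T b‖ ≤ L * ‖a - b‖)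
    (w : ℕ → H) (δ c : ℕ → ℝ) (r : ℝ) (hr : 0 < r)
    (hδ0 : 0 < δ 0) (hδ1 : 0 < δ 1)
    (hc : ∀ n, 0 ≤ c n) (hcsum : Summable fun n => c (n + 1))
    (hrule : ∀ n, 1 ≤ n → δ (n + 1) =
      if T (w n) ≠ T (w (n + 1)) then
        min (r * ‖w n - w (n + 1)‖ / ‖T (w n) - T (w (n + 1))‖) (δ n + c n)
      else δ n + c n) :
    ∃ δbar : ℝ, Tendsto δ atTop (𝓝 δbar) ∧
      min (r / L) (δ 1) ≤ δbar ∧ δbar ≤ δ 1 + ∑' n, c (n + 1) := by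
  set m : ℝ := min (r / L) (δ 1) with hm
  set f : ℕ → ℝ := fun k => c (k + 1) with hf
  have hfsum : Summable f := hcsum
  have hfnn : ∀ k, 0 ≤ f k := fun k => hc (k + 1)
  -- tail sums
  set S : ℕ → ℝ := fun n => ∑' k, f (k + n) with hS
  have hSsum : ∀ n, Summable fun k => f (k + n) := fun n =>
    (summable_nat_add_iff n).2 hfsum
  have hSnn : ∀ n, 0 ≤ S n := fun n => tsum_nonneg fun k => hfnn _
  have hSrec : ∀ n, S n = c (n + 1) + S (n + 1) := by
    intro n
    have h0 := Summable.tsum_eq_zero_add (f := fun k => f (k + n)) (hSsum n)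
    have h1 : (∑' k, f (k + 1 + n)) = S (n + 1) := by
      apply tsum_congr
      intro k
      congr 1
      omega
    simpa [h1] using h0
  have hStend : Tendsto S atTop (𝓝 0) := tendsto_sum_nat_add f
  -- lower bound on δ n for n ≥ 1
  have hlow : ∀ n, 1 ≤ n → m ≤ δ n := by
    intro n hn
    induction n, hn using Nat.le_induction with
    | base => exact min_le_right _ _
    | succ n hn ih =>
      rw [hrule n hn]
      split_ifs with h
      · refine le_min ?_ (by linarith [hc n])
        refine (min_le_left _ _).trans ?_
        set u : ℝ := ‖T (w n) - T (w (n + 1))‖ with hu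
        set v : ℝ := ‖w n - w (n + 1)‖ with hv
        have hupos : 0 < u := norm_pos_iff.2 (sub_ne_zero.2 h)
        have hTl : u ≤ L * v := hTlip _ _
        rw [div_le_div_iff₀ hL hupos]
        nlinarith [hr.le]
      · linarith [hc n]
  -- the auxiliary antitone sequence
  set φ : ℕ → ℝ := fun n => δ (n + 1) + S n with hφ
  have hanti : Antitone φ := by
    apply antitone_nat_of_succ_le
    intro n
    have h1 : δ (n + 2) ≤ δ (n + 1) + c (n + 1) := by
      rw [hrule (n + 1) (by omega)]
      split_ifs with h
      · exact min_le_right _ _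
      · exact le_rfl
    have h2 := hSrec n
    simp only [hφ]
    have : n + 1 + 1 = n + 2 := by omega
    rw [this]
    linarith
  have hmφ : ∀ n, m ≤ φ n := fun n =>
    le_add_of_le_of_nonneg (hlow (n + 1) (by omega)) (hSnn n)
  have hbdd : BddBelow (Set.range φ) := ⟨m, by rintro x ⟨n, rfl⟩; exact hmφ n⟩
  have hφtend : Tendsto φ atTop (𝓝 (⨅ n, φ n)) := tendsto_atTop_ciInf hanti hbdd
  set δbar : ℝ := ⨅ n, φ n with hδbar
  refine ⟨δbar, ?_, ?_, ?_⟩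
  · have h1 : Tendsto (fun n => δ (n + 1)) atTop (𝓝 δbar) := by
      have := hφtend.sub hStend
      simpa [hφ] using this
    exact (tendsto_add_atTop_iff_nat 1).1 h1
  · exact ge_of_tendsto' hφtend hmφ
  · have h1 : δbar ≤ φ 0 := ciInf_le hbdd 0
    have h2 : S 0 = ∑' n, c (n + 1) := by
      apply tsum_congr; intro k; simp [hf]
    simp only [hφ] at h1
    rw [h2] at h1
    exact h1
end

section
/- Under Assumption A, let β ∈ (0, 1/4), r ∈ (β, (1−2β)/2), let {σ_n} be a sequence in (0,1) with lim_{n→∞} σ_n = 0, let {c_n} be a sequence in [0, ∞) with Σ_{n=1}^∞ c_n < ∞, and let δ_0, δ_1 > 0. Given arbitrary v̂, w_0, w_1 ∈ H, let {w_n} satisfy, for all n ≥ 1, the resolvent inclusion σ_n v̂ + (1−σ_n) w_n − δ_n T w_n − δ_{n−1}(1−σ_n)(T w_n − T w_{n−1}) − w_{n+1} ∈ δ_n • S(w_{n+1}), where the step sizes δ_n obey the adaptive rule: δ_{n+1} = min{ r‖w_n − w_{n+1}‖ / ‖T w_n − T w_{n+1}‖, δ_n + c_n } if T w_n ≠ T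 w_{n+1}, and δ_{n+1} = δ_n + c_n otherwise. Then the sequence {w_n} is bounded. -/
open Filter Topology
open scoped RealInnerProductSpace Pointwise Classical

set_option maxHeartbeats 1000000

/-- Pure real-arithmetic step inequality. -/
lemma scalar_step (ε R σ K0 b a a' d d' s s' q : ℝ)
    (hε : 0 < ε) (hε16 : ε ≤ 1/16)
    (hR0 : 0 ≤ R) (hr : 2*R + 2*ε ≤ 1)
    (hσ0 : 0 ≤ σ) (hσε : σ ≤ ε^2)
    (ha : 0 ≤ a) (hd : 0 ≤ d) (hd' : 0 ≤ d')
    (hq0 : 0 ≤ q) (hq : q ≤ R*d')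
    (hs : |s| ≤ 2*q*a)
    (hb : 0 ≤ b) (hbK : b^2 ≤ 2*K0 + 2*a^2) (hK0 : 0 ≤ K0)
    (hmain : a'^2 + s' ≤ σ*K0 + (1-σ)*a^2 - d^2 + 2*σ*b*d + (1-σ)*s + 2*q*d) :
    a'^2 + s' + (R + ε)*d^2
      ≤ (1 - σ*((1 - 2*ε - R)/2)) * (a^2 + s + (R + ε)*d'^2)
        + σ*((1+2*ε)*K0) := by
  have hRhalf : R ≤ 1/2 := by linarith
  have hκ0 : 0 < 1 - 2*ε - R := by linarith
  have hσ1 : σ ≤ 1 := by nlinarith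
  have h1 : 2*σ*b*d ≤ ε*d^2 + ε*σ*b^2 := by
    have key : 0 ≤ ε*(ε*d^2 + ε*σ*b^2 - 2*σ*b*d) := by
      nlinarith [sq_nonneg (σ*b - ε*d), mul_nonneg (mul_nonneg hσ0 (sq_nonneg b)) (sub_nonneg.mpr hσε)]
    nlinarith
  have h1b : ε*σ*b^2 ≤ 2*ε*σ*K0 + 2*ε*σ*a^2 := by
    have := mul_le_mul_of_nonneg_left hbK (mul_nonneg hε.le hσ0)
    nlinarith
  have h2 : 2*q*d ≤ R*d'^2 + R*d^2 := by
    have h2a : q*d ≤ R*d'*d := mul_le_mul_of_nonneg_right hq hd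
    nlinarith [mul_nonneg hR0 (sq_nonneg (d - d'))]
  have hsR : |s| ≤ R*(d'^2 + a^2) := by
    have h3a : 2*q*a ≤ 2*(R*d')*a := mul_le_mul_of_nonneg_right (by nlinarith) ha
    nlinarith [mul_nonneg hR0 (sq_nonneg (d' - a))]
  have hsub : s ≤ R*(d'^2+a^2) := (le_abs_self s).trans hsR
  have hslb : -(R*(d'^2+a^2)) ≤ s := neg_le_of_abs_le hsR
  have hmid : a'^2 + s' ≤ σ*((1+2*ε)*K0) + (1 - σ*(1 - 2*ε - R))*a^2 + s + (R + σ*R)*d'^2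
      + (-1 + ε + R)*d^2 := by
    have h3 : (1-σ)*s ≤ s + σ*(R*(d'^2+a^2)) := by
      have := mul_le_mul_of_nonneg_left hslb hσ0
      nlinarith
    nlinarith
  have hbr : 0 ≤ (R+ε)*((1 - 2*ε - R)/2) + R + ((1 - 2*ε - R)/2)*R := by nlinarith
  have hbr2 : (R+ε)*((1 - 2*ε - R)/2) + R + ((1 - 2*ε - R)/2)*R ≤ 2 := by nlinarith
  have hcoef : σ*((R+ε)*((1 - 2*ε - R)/2) + R + ((1 - 2*ε - R)/2)*R) ≤ ε := by
    have h4 : σ*((R+ε)*((1 - 2*ε - R)/2) + R + ((1 - 2*ε - R)/2)*R) ≤ ε^2*2 := by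
      calc σ*((R+ε)*((1 - 2*ε - R)/2) + R + ((1 - 2*ε - R)/2)*R)
          ≤ ε^2*((R+ε)*((1 - 2*ε - R)/2) + R + ((1 - 2*ε - R)/2)*R) :=
            mul_le_mul_of_nonneg_right hσε hbr
        _ ≤ ε^2*2 := mul_le_mul_of_nonneg_left hbr2 (sq_nonneg ε)
    nlinarith
  have hfin : (1 - σ*(1 - 2*ε - R))*a^2 + s + (R + σ*R)*d'^2
      ≤ (1 - σ*((1 - 2*ε - R)/2)) * (a^2 + s + (R + ε)*d'^2) := by
    have hmul : σ*((1 - 2*ε - R)/2)*s ≤ σ*((1 - 2*ε - R)/2)*(R*(d'^2+a^2)) :=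
      mul_le_mul_of_nonneg_left hsub (by positivity)
    have e1 : 0 ≤ σ*((1 - 2*ε - R)/2)*((1-R)*a^2) := by
      apply mul_nonneg (by positivity) (mul_nonneg (by linarith) (sq_nonneg a))
    have e2 : 0 ≤ (ε - σ*((R+ε)*((1 - 2*ε - R)/2) + R + ((1 - 2*ε - R)/2)*R))*d'^2 :=
      mul_nonneg (by linarith) (sq_nonneg d')
    nlinarith [e1, e2, hmul]
  have hdrop : (-1 + ε + R)*d^2 + (R+ε)*d^2 ≤ 0 := by nlinarith [sq_nonneg d]
  linarith

lemma hilbert_step {H : Type*} [NormedAddCommGroup H] [InnerProductSpace ℝ H]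
    (T : H → H) (S : H → Set H)
    (hSmono : ∀ ⦃a b a' b' : H⦄, a' ∈ S a → b' ∈ S b → 0 ≤ ⟪a' - b', a - b⟫)
    (hTmono : ∀ a b : H, 0 ≤ ⟪T a - T b, a - b⟫)
    (z : H) (hz : -T z ∈ S z)
    (σn δn δm : ℝ) (hσ0 : 0 < σn) (hσ1 : σn < 1) (hδn : 0 < δn) (hδm : 0 ≤ δm)
    (vhat wp wc wn : H)
    (hit : σn • vhat + (1 - σn) • wc - δn • T wc - (δm * (1 - σn)) • (T wc - T wp) - wn
        ∈ δn • S wn) :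
    ‖wn - z‖^2 + 2*δn*⟪T wn - T wc, z - wn⟫
      ≤ σn*‖vhat - z‖^2 + (1-σn)*‖wc - z‖^2 - ‖wc - wn‖^2
        + 2*σn*‖vhat - wc‖*‖wc - wn‖
        + (1-σn)*(2*δm*⟪T wc - T wp, z - wc⟫)
        + 2*(δm*‖T wc - T wp‖)*‖wc - wn‖ := by
  obtain ⟨x, hxS, hxe⟩ := hit
  set y : H := σn • vhat + (1 - σn) • wc with hy
  have hxe' : δn • x = y - δn • T wc - (δm * (1 - σn)) • (T wc - T wp) - wn := hxe
  have h1 : 0 ≤ ⟪x - -T z, wn - z⟫ := hSmono hxS hz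
  have h2 : 0 ≤ ⟪T wn - T z, wn - z⟫ := hTmono wn z
  have e1 : ⟪δn • x, wn - z⟫
      = ⟪y - wn, wn - z⟫ - δn*⟪T wc, wn - z⟫ - (δm*(1-σn))*⟪T wc - T wp, wn - z⟫ := by
    rw [hxe']
    simp only [inner_sub_left, real_inner_smul_left]
    ring
  have h1' : 0 ≤ ⟪δn • x, wn - z⟫ + δn * ⟪T z, wn - z⟫ := by
    have := mul_nonneg hδn.le h1
    rw [real_inner_smul_left]
    simp only [inner_sub_left, inner_neg_left] at this ⊢
    linarith
  have h2' : 0 ≤ δn*⟪T wn, wn - z⟫ - δn*⟪T z, wn - z⟫ := by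
    have := mul_nonneg hδn.le h2
    simp only [inner_sub_left] at this
    nlinarith
  have hA : δn*⟪T wc - T wn, wn - z⟫ + (δm*(1-σn))*⟪T wc - T wp, wn - z⟫
      ≤ ⟪y - wn, wn - z⟫ := by
    rw [e1] at h1'
    simp only [inner_sub_left] at h1' ⊢
    nlinarith [h1', h2']
  -- identity
  have hid : 2*⟪y - wn, wn - z⟫ = ‖y - z‖^2 - ‖wn - z‖^2 - ‖y - wn‖^2 := by
    have e := norm_add_sq_real (y - wn) (wn - z)
    rw [sub_add_sub_cancel] at e
    linarith
  -- convexity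
  have hconv : ‖y - z‖^2 ≤ σn*‖vhat - z‖^2 + (1-σn)*‖wc - z‖^2 := by
    have hyz : y - z = σn • (vhat - z) + (1 - σn) • (wc - z) := by
      rw [hy]; module
    rw [hyz, norm_add_sq_real]
    rw [norm_smul, norm_smul, real_inner_smul_left, real_inner_smul_right]
    simp only [Real.norm_eq_abs, abs_of_pos hσ0, abs_of_pos (by linarith : (0:ℝ) < 1 - σn)]
    have hcs := real_inner_le_norm (vhat - z) (wc - z)
    nlinarith [sq_nonneg (‖vhat - z‖ - ‖wc - z‖), mul_pos hσ0 (by linarith : (0:ℝ) < 1 - σn),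
      norm_nonneg (vhat - z), norm_nonneg (wc - z)]
  -- lower bound on ‖y - wn‖²
  have hlow : ‖wc - wn‖^2 - 2*σn*‖vhat - wc‖*‖wc - wn‖ ≤ ‖y - wn‖^2 := by
    have hywn : wc - wn = (y - wn) - σn • (vhat - wc) := by rw [hy]; module
    have htri : ‖wc - wn‖ ≤ ‖y - wn‖ + σn*‖vhat - wc‖ := by
      calc ‖wc - wn‖ = ‖(y - wn) - σn • (vhat - wc)‖ := by rw [← hywn]
        _ ≤ ‖y - wn‖ + ‖σn • (vhat - wc)‖ := norm_sub_le _ _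
        _ = ‖y - wn‖ + σn*‖vhat - wc‖ := by
            rw [norm_smul, Real.norm_eq_abs, abs_of_pos hσ0]
    rcases le_or_gt (σn*‖vhat - wc‖) ‖wc - wn‖ with hcase | hcase
    · have h0 : 0 ≤ ‖wc - wn‖ - σn*‖vhat - wc‖ := by linarith
      have hle : ‖wc - wn‖ - σn*‖vhat - wc‖ ≤ ‖y - wn‖ := by linarith
      have := mul_self_le_mul_self h0 hle
      nlinarith [this, sq_nonneg (σn*‖vhat - wc‖)]
    · have hb0 : (0:ℝ) ≤ σn*‖vhat - wc‖ := mul_nonneg hσ0.le (norm_nonneg _)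
      have h := mul_nonneg (norm_nonneg (wc - wn))
        (by linarith : (0:ℝ) ≤ 2*(σn*‖vhat - wc‖) - ‖wc - wn‖)
      nlinarith [h, sq_nonneg ‖y - wn‖]
  -- split the ΔT cross term
  have hsplit : ⟪T wc - T wp, wn - z⟫
      = -⟪T wc - T wp, z - wc⟫ + ⟪T wc - T wp, wn - wc⟫ := by
    rw [show wn - z = -(z - wc) + (wn - wc) by abel, inner_add_right, inner_neg_right]
  have hcs2 : ⟪T wc - T wp, wc - wn⟫ ≤ ‖T wc - T wp‖*‖wc - wn‖ := real_inner_le_norm _ _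
  have hKneg : ⟪T wc - T wp, wc - wn⟫ = -⟪T wc - T wp, wn - wc⟫ := by
    rw [show wc - wn = -(wn - wc) by abel, inner_neg_right]
  have hflip : ⟪T wc - T wn, wn - z⟫ = ⟪T wn - T wc, z - wn⟫ := by
    rw [show T wc - T wn = -(T wn - T wc) by abel, show wn - z = -(z - wn) by abel,
      inner_neg_neg]
  rw [hflip, hsplit] at hA
  have hmul1 : (δm*(1-σn))*(-⟪T wc - T wp, wn - wc⟫) ≤ δm*‖T wc - T wp‖*‖wc - wn‖ := by
    have hnn : 0 ≤ ‖T wc - T wp‖*‖wc - wn‖ := by positivity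
    have hco : 0 ≤ δm*(1-σn) := mul_nonneg hδm (by linarith)
    calc (δm*(1-σn))*(-⟪T wc - T wp, wn - wc⟫)
        ≤ (δm*(1-σn))*(‖T wc - T wp‖*‖wc - wn‖) := by
          apply mul_le_mul_of_nonneg_left _ hco
          rw [← hKneg]; exact hcs2
      _ ≤ δm*(‖T wc - T wp‖*‖wc - wn‖) := by
          nlinarith [mul_nonneg (mul_nonneg hδm hσ0.le) hnn]
      _ = δm*‖T wc - T wp‖*‖wc - wn‖ := by ring
  linarith [hA, hid, hconv, hlow, hmul1]
/-- Boundedness of the forward-reflected-anchored-backward splitting method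
(Algorithm 3.2) under Assumption A with the adaptive step sizes. -/
theorem stmt4 {H : Type*} [NormedAddCommGroup H] [InnerProductSpace ℝ H] [CompleteSpace H]
    (T : H → H) (L : ℝ) (hL : 0 < L)
    (hTmono : ∀ a b : H, 0 ≤ ⟪T a - T b, a - b⟫)
    (hTlip : ∀ a b : H, ‖T a - T b‖ ≤ L * ‖a - b‖)
    (S : H → Set H)
    (hSmono : ∀ ⦃a b a' b' : H⦄, a' ∈ S a → b' ∈ S b → 0 ≤ ⟪a' - b', a - b⟫)
    (hSmax : ∀ a a' : H, (∀ b b', b' ∈ S b → 0 ≤ ⟪a' - b', a - b⟫) → a' ∈ S a)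
    (hZ : {z : H | -T z ∈ S z}.Nonempty)
    (β r : ℝ) (hβ : β ∈ Set.Ioo (0 : ℝ) (1 / 4)) (hrr : r ∈ Set.Ioo β ((1 - 2 * β) / 2))
    (σ : ℕ → ℝ) (hσ : ∀ n, σ n ∈ Set.Ioo (0 : ℝ) 1) (hσ0 : Tendsto σ atTop (𝓝 0))
    (c : ℕ → ℝ) (hc : ∀ n, 0 ≤ c n) (hcsum : Summable fun n => c (n + 1))
    (δ : ℕ → ℝ) (hδ0 : 0 < δ 0) (hδ1 : 0 < δ 1)
    (vhat : H) (w : ℕ → H)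
    (hrule : ∀ n, 1 ≤ n → δ (n + 1) =
      if T (w n) ≠ T (w (n + 1)) then
        min (r * ‖w n - w (n + 1)‖ / ‖T (w n) - T (w (n + 1))‖) (δ n + c n)
      else δ n + c n)
    (hiter : ∀ n, 1 ≤ n →
      σ n • vhat + (1 - σ n) • w n - δ n • T (w n)
          - (δ (n - 1) * (1 - σ n)) • (T (w n) - T (w (n - 1))) - w (n + 1)
        ∈ δ n • S (w (n + 1))) :
    ∃ C : ℝ, ∀ n, ‖w n‖ ≤ C := by
  obtain ⟨z, hz⟩ := hZ
  obtain ⟨hβ0, hβ4⟩ := hβ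
  obtain ⟨hrβ, hr2⟩ := hrr
  have hr0 : 0 < r := lt_trans hβ0 hrβ
  -- the margin ε and slope R
  have hε0 : 0 < β / 4 := by positivity
  have hε16 : β / 4 ≤ 1 / 16 := by linarith
  have hrineq : 2 * ((1 + β / 4) * r) + 2 * (β / 4) ≤ 1 := by nlinarith
  have hR0 : (0:ℝ) ≤ (1 + β / 4) * r := by positivity
  -- basic step-size facts
  have hδlow : ∀ n, 1 ≤ n → min (δ 1) (r / L) ≤ δ n := by
    intro n hn
    induction n, hn using Nat.le_induction with
    | base => exact min_le_left _ _
    | succ n hn ih =>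
      rw [hrule n hn]
      split_ifs with h
      · refine le_min ?_ (by linarith [hc n])
        have hΔ : 0 < ‖T (w n) - T (w (n + 1))‖ := by
          rw [norm_pos_iff, sub_ne_zero]; exact h
        have hlip := hTlip (w n) (w (n + 1))
        have h2 : r / L ≤ r * ‖w n - w (n + 1)‖ / ‖T (w n) - T (w (n + 1))‖ := by
          rw [div_le_div_iff₀ hL hΔ]
          nlinarith
        exact le_trans (min_le_right _ _) h2
      · linarith [hc n]
  have hmpos : 0 < min (δ 1) (r / L) := lt_min hδ1 (div_pos hr0 hL)
  have hδpos : ∀ n, 0 < δ n := by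
    intro n
    cases n with
    | zero => exact hδ0
    | succ k => exact lt_of_lt_of_le hmpos (hδlow (k + 1) (by omega))
  have hδstep : ∀ n, 1 ≤ n → δ (n + 1) ≤ δ n + c n := by
    intro n hn; rw [hrule n hn]; split_ifs
    · exact min_le_right _ _
    · exact le_rfl
  have hδkey : ∀ n, 1 ≤ n →
      δ (n + 1) * ‖T (w n) - T (w (n + 1))‖ ≤ r * ‖w n - w (n + 1)‖ := by
    intro n hn
    rw [hrule n hn]
    split_ifs with h
    · have hΔ : 0 < ‖T (w n) - T (w (n + 1))‖ := by
        rw [norm_pos_iff, sub_ne_zero]; exact h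
      calc min (r * ‖w n - w (n + 1)‖ / ‖T (w n) - T (w (n + 1))‖) (δ n + c n)
            * ‖T (w n) - T (w (n + 1))‖
          ≤ (r * ‖w n - w (n + 1)‖ / ‖T (w n) - T (w (n + 1))‖)
            * ‖T (w n) - T (w (n + 1))‖ :=
            mul_le_mul_of_nonneg_right (min_le_left _ _) hΔ.le
        _ = r * ‖w n - w (n + 1)‖ := div_mul_cancel₀ _ hΔ.ne'
    · push_neg at h
      rw [h, sub_self, norm_zero, mul_zero]
      positivity
  -- convergence of the step sizes
  have hcsum' : Summable c := (summable_nat_add_iff 1).mp hcsum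
  have htails : ∀ n : ℕ, Summable fun k => c (k + n) := fun n =>
    (summable_nat_add_iff n).mpr hcsum'
  have ht0 : ∀ n : ℕ, 0 ≤ ∑' k, c (k + n) := fun n => tsum_nonneg fun k => hc _
  have htrec : ∀ n : ℕ, (∑' k, c (k + n)) = c n + ∑' k, c (k + (n + 1)) := by
    intro n
    rw [Summable.tsum_eq_zero_add (htails n)]
    simp only [zero_add]
    congr 1
    exact tsum_congr fun k => by rw [show k + 1 + n = k + (n + 1) by omega]
  have httend : Tendsto (fun n => ∑' k, c (k + n)) atTop (𝓝 0) := tendsto_sum_nat_add c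
  have hφanti : Antitone (fun n => δ (n + 1) + ∑' k, c (k + (n + 1))) := by
    apply antitone_nat_of_succ_le
    intro n
    have h1 := hδstep (n + 1) (by omega)
    have h2 := htrec (n + 1)
    show δ (n + 1 + 1) + _ ≤ δ (n + 1) + _
    linarith
  have hφbdd : BddBelow (Set.range (fun n => δ (n + 1) + ∑' k, c (k + (n + 1)))) := by
    refine ⟨min (δ 1) (r / L), ?_⟩
    rintro x ⟨n, rfl⟩
    have h1 := hδlow (n + 1) (by omega)
    have h2 := ht0 (n + 1)
    show min (δ 1) (r / L) ≤ δ (n + 1) + _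
    linarith
  have hφconv : Tendsto (fun n => δ (n + 1) + ∑' k, c (k + (n + 1))) atTop
      (𝓝 (⨅ n, δ (n + 1) + ∑' k, c (k + (n + 1)))) := tendsto_atTop_ciInf hφanti hφbdd
  set L0 : ℝ := ⨅ n, δ (n + 1) + ∑' k, c (k + (n + 1)) with hL0def
  have hδconv : Tendsto δ atTop (𝓝 L0) := by
    rw [← tendsto_add_atTop_iff_nat 1]
    have h2 : Tendsto (fun n : ℕ => ∑' k, c (k + (n + 1))) atTop (𝓝 0) :=
      httend.comp (tendsto_add_atTop_nat 1)
    have h3 := hφconv.sub h2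
    rw [sub_zero] at h3
    exact h3.congr fun n => by ring
  have hL0 : min (δ 1) (r / L) ≤ L0 :=
    ge_of_tendsto hδconv (eventually_atTop.mpr ⟨1, fun n hn => hδlow n hn⟩)
  have hL0pos : 0 < L0 := lt_of_lt_of_le hmpos hL0
  -- eventual bounds
  have hηpos : 0 < (β / 4) * L0 / 3 := by positivity
  obtain ⟨N₁, hN₁⟩ := (Metric.tendsto_atTop.mp hδconv) ((β / 4) * L0 / 3) hηpos
  obtain ⟨N₂, hN₂⟩ := (Metric.tendsto_atTop.mp hσ0) ((β / 4) ^ 2) (by positivity)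
  have hrat : ∀ n, N₁ ≤ n → δ n ≤ (1 + β / 4) * δ (n + 1) := by
    intro n hn
    have h1 := hN₁ n hn
    have h2 := hN₁ (n + 1) (by omega)
    rw [Real.dist_eq] at h1 h2
    obtain ⟨h1a, h1b⟩ := abs_lt.mp h1
    obtain ⟨h2a, h2b⟩ := abs_lt.mp h2
    nlinarith [mul_pos hε0 hL0pos]
  have hσsmall : ∀ n, N₂ ≤ n → σ n ≤ (β / 4) ^ 2 := by
    intro n hn
    have h1 := hN₂ n hn
    rw [Real.dist_eq, sub_zero] at h1
    exact ((abs_lt.mp h1).2).le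
  -- delayed step-size/operator bound
  have hqb : ∀ k : ℕ, N₁ ≤ k + 1 →
      δ (k + 1) * ‖T (w (k + 2)) - T (w (k + 1))‖
        ≤ (1 + β / 4) * r * ‖w (k + 1) - w (k + 2)‖ := by
    intro k hk
    have h1 := hδkey (k + 1) (by omega)
    have h2 := hrat (k + 1) hk
    rw [norm_sub_rev (T (w (k + 1))) (T (w (k + 2)))] at h1
    have hnn : (0:ℝ) ≤ ‖T (w (k + 2)) - T (w (k + 1))‖ := norm_nonneg _
    calc δ (k + 1) * ‖T (w (k + 2)) - T (w (k + 1))‖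
        ≤ ((1 + β / 4) * δ (k + 2)) * ‖T (w (k + 2)) - T (w (k + 1))‖ :=
          mul_le_mul_of_nonneg_right h2 hnn
      _ = (1 + β / 4) * (δ (k + 2) * ‖T (w (k + 2)) - T (w (k + 1))‖) := by ring
      _ ≤ (1 + β / 4) * (r * ‖w (k + 1) - w (k + 2)‖) := by
          apply mul_le_mul_of_nonneg_left h1 (by positivity)
      _ = (1 + β / 4) * r * ‖w (k + 1) - w (k + 2)‖ := by ring
  -- Cauchy-Schwarz bound for the correction term
  have hsabs : ∀ k : ℕ, |2 * δ (k + 1) * ⟪T (w (k + 2)) - T (w (k + 1)), z - w (k + 2)⟫|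
      ≤ 2 * (δ (k + 1) * ‖T (w (k + 2)) - T (w (k + 1))‖) * ‖w (k + 2) - z‖ := by
    intro k
    have h1 := abs_real_inner_le_norm (T (w (k + 2)) - T (w (k + 1))) (z - w (k + 2))
    have h2 : ‖z - w (k + 2)‖ = ‖w (k + 2) - z‖ := norm_sub_rev _ _
    rw [h2] at h1
    have h3 : |2 * δ (k + 1) * ⟪T (w (k + 2)) - T (w (k + 1)), z - w (k + 2)⟫|
        = 2 * δ (k + 1) * |⟪T (w (k + 2)) - T (w (k + 1)), z - w (k + 2)⟫| := by
      rw [abs_mul, abs_of_pos (by linarith [hδpos (k+1)] : (0:ℝ) < 2 * δ (k + 1))]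
    rw [h3]
    have h4 := mul_le_mul_of_nonneg_left h1 (by linarith [hδpos (k+1)] : (0:ℝ) ≤ 2 * δ (k + 1))
    calc 2 * δ (k + 1) * |⟪T (w (k + 2)) - T (w (k + 1)), z - w (k + 2)⟫|
        ≤ 2 * δ (k + 1) * (‖T (w (k + 2)) - T (w (k + 1))‖ * ‖w (k + 2) - z‖) := h4
      _ = 2 * (δ (k + 1) * ‖T (w (k + 2)) - T (w (k + 1))‖) * ‖w (k + 2) - z‖ := by ring
  -- main one-step Lyapunov estimate
  have hstepQ : ∀ n, N₁ + N₂ + 2 ≤ n →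
      ‖w (n + 1) - z‖ ^ 2 + 2 * δ n * ⟪T (w (n + 1)) - T (w n), z - w (n + 1)⟫
          + ((1 + β / 4) * r + β / 4) * ‖w n - w (n + 1)‖ ^ 2
        ≤ (1 - σ n * ((1 - 2 * (β / 4) - (1 + β / 4) * r) / 2))
            * (‖w n - z‖ ^ 2 + 2 * δ (n - 1) * ⟪T (w n) - T (w (n - 1)), z - w n⟫
              + ((1 + β / 4) * r + β / 4) * ‖w (n - 1) - w n‖ ^ 2)
          + σ n * ((1 + 2 * (β / 4)) * ‖vhat - z‖ ^ 2) := by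
    intro n hn
    obtain ⟨k, rfl⟩ : ∃ k, n = k + 2 := ⟨n - 2, by omega⟩
    simp only [show k + 2 - 1 = k + 1 from rfl]
    have hit : σ (k + 2) • vhat + (1 - σ (k + 2)) • w (k + 2) - δ (k + 2) • T (w (k + 2))
        - (δ (k + 1) * (1 - σ (k + 2))) • (T (w (k + 2)) - T (w (k + 1))) - w (k + 3)
        ∈ δ (k + 2) • S (w (k + 3)) := hiter (k + 2) (by omega)
    have hmain := hilbert_step T S hSmono hTmono z hz (σ (k + 2)) (δ (k + 2)) (δ (k + 1))
      (hσ (k + 2)).1 (hσ (k + 2)).2 (hδpos (k + 2)) (hδpos (k + 1)).le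
      vhat (w (k + 1)) (w (k + 2)) (w (k + 3)) hit
    have hbK : ‖vhat - w (k + 2)‖ ^ 2 ≤ 2 * ‖vhat - z‖ ^ 2 + 2 * ‖w (k + 2) - z‖ ^ 2 := by
      have h1 : ‖vhat - w (k + 2)‖ ≤ ‖vhat - z‖ + ‖w (k + 2) - z‖ := by
        calc ‖vhat - w (k + 2)‖ = ‖(vhat - z) + (z - w (k + 2))‖ := by rw [sub_add_sub_cancel]
          _ ≤ ‖vhat - z‖ + ‖z - w (k + 2)‖ := norm_add_le _ _
          _ = ‖vhat - z‖ + ‖w (k + 2) - z‖ := by rw [norm_sub_rev z]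
      nlinarith [h1, norm_nonneg (vhat - w (k + 2)), norm_nonneg (vhat - z),
        norm_nonneg (w (k + 2) - z), sq_nonneg (‖vhat - z‖ - ‖w (k + 2) - z‖)]
    exact scalar_step (β / 4) ((1 + β / 4) * r) (σ (k + 2)) (‖vhat - z‖ ^ 2)
      (‖vhat - w (k + 2)‖) (‖w (k + 2) - z‖) (‖w (k + 3) - z‖)
      (‖w (k + 2) - w (k + 3)‖) (‖w (k + 1) - w (k + 2)‖)
      (2 * δ (k + 1) * ⟪T (w (k + 2)) - T (w (k + 1)), z - w (k + 2)⟫)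
      (2 * δ (k + 2) * ⟪T (w (k + 3)) - T (w (k + 2)), z - w (k + 3)⟫)
      (δ (k + 1) * ‖T (w (k + 2)) - T (w (k + 1))‖)
      hε0 hε16 hR0 hrineq (hσ (k + 2)).1.le (hσsmall (k + 2) (by omega))
      (norm_nonneg _) (norm_nonneg _) (norm_nonneg _)
      (mul_nonneg (hδpos _).le (norm_nonneg _)) (hqb k (by omega)) (hsabs k)
      (norm_nonneg _) hbK (by positivity) hmain
  -- the uniform bound on the Lyapunov function
  have hκpos : 0 < (1 - 2 * (β / 4) - (1 + β / 4) * r) / 2 := by nlinarith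
  have hK1nn : (0:ℝ) ≤ (1 + 2 * (β / 4)) * ‖vhat - z‖ ^ 2 := by positivity
  set G : ℝ := max (‖w (N₁ + N₂ + 2) - z‖ ^ 2
      + 2 * δ (N₁ + N₂ + 2 - 1) * ⟪T (w (N₁ + N₂ + 2)) - T (w (N₁ + N₂ + 2 - 1)),
          z - w (N₁ + N₂ + 2)⟫
      + ((1 + β / 4) * r + β / 4) * ‖w (N₁ + N₂ + 2 - 1) - w (N₁ + N₂ + 2)‖ ^ 2)
      (((1 + 2 * (β / 4)) * ‖vhat - z‖ ^ 2) / ((1 - 2 * (β / 4) - (1 + β / 4) * r) / 2))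
      with hGdef
  have hGnn : 0 ≤ G := le_trans (div_nonneg hK1nn hκpos.le) (le_max_right _ _)
  have hQbound : ∀ n, N₁ + N₂ + 2 ≤ n →
      ‖w n - z‖ ^ 2 + 2 * δ (n - 1) * ⟪T (w n) - T (w (n - 1)), z - w n⟫
        + ((1 + β / 4) * r + β / 4) * ‖w (n - 1) - w n‖ ^ 2 ≤ G := by
    intro n hn
    induction n, hn using Nat.le_induction with
    | base => exact le_max_left _ _
    | succ n hn ih =>
      have hst := hstepQ n hn
      have hσn := hσ n
      have ht1 : σ n * ((1 - 2 * (β / 4) - (1 + β / 4) * r) / 2) ≤ 1 := by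
        nlinarith [hσn.1, hσn.2]
      have ht0' : 0 ≤ σ n * ((1 - 2 * (β / 4) - (1 + β / 4) * r) / 2) :=
        mul_nonneg hσn.1.le hκpos.le
      have h1 : (1 - σ n * ((1 - 2 * (β / 4) - (1 + β / 4) * r) / 2))
            * (‖w n - z‖ ^ 2 + 2 * δ (n - 1) * ⟪T (w n) - T (w (n - 1)), z - w n⟫
              + ((1 + β / 4) * r + β / 4) * ‖w (n - 1) - w n‖ ^ 2)
          ≤ (1 - σ n * ((1 - 2 * (β / 4) - (1 + β / 4) * r) / 2)) * G :=
        mul_le_mul_of_nonneg_left ih (by linarith)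
      have h2 : σ n * ((1 + 2 * (β / 4)) * ‖vhat - z‖ ^ 2)
          ≤ σ n * ((1 - 2 * (β / 4) - (1 + β / 4) * r) / 2) * G := by
        have hKG : ((1 + 2 * (β / 4)) * ‖vhat - z‖ ^ 2)
            / ((1 - 2 * (β / 4) - (1 + β / 4) * r) / 2) ≤ G := le_max_right _ _
        calc σ n * ((1 + 2 * (β / 4)) * ‖vhat - z‖ ^ 2)
            = σ n * ((1 - 2 * (β / 4) - (1 + β / 4) * r) / 2)
              * (((1 + 2 * (β / 4)) * ‖vhat - z‖ ^ 2)
                / ((1 - 2 * (β / 4) - (1 + β / 4) * r) / 2)) := by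
              rw [mul_assoc, mul_comm ((1 - 2 * (β / 4) - (1 + β / 4) * r) / 2),
                div_mul_cancel₀ _ hκpos.ne']
          _ ≤ σ n * ((1 - 2 * (β / 4) - (1 + β / 4) * r) / 2) * G :=
              mul_le_mul_of_nonneg_left hKG ht0'
      have hidx : n + 1 - 1 = n := by omega
      rw [hidx]
      nlinarith [hst, h1, h2]
  -- from the Lyapunov bound to a norm bound
  have hfinal : ∀ n, N₁ + N₂ + 2 ≤ n → ‖w n - z‖ ^ 2 ≤ 2 * G := by
    intro n hn
    obtain ⟨k, rfl⟩ : ∃ k, n = k + 2 := ⟨n - 2, by omega⟩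
    have hQ := hQbound (k + 2) hn
    simp only [show k + 2 - 1 = k + 1 from rfl] at hQ
    have hq := hqb k (by omega)
    have hsa := hsabs k
    have hsR : |2 * δ (k + 1) * ⟪T (w (k + 2)) - T (w (k + 1)), z - w (k + 2)⟫|
        ≤ (1 + β / 4) * r * (‖w (k + 1) - w (k + 2)‖ ^ 2 + ‖w (k + 2) - z‖ ^ 2) := by
      have h1 : 2 * (δ (k + 1) * ‖T (w (k + 2)) - T (w (k + 1))‖) * ‖w (k + 2) - z‖
          ≤ 2 * ((1 + β / 4) * r * ‖w (k + 1) - w (k + 2)‖) * ‖w (k + 2) - z‖ := by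
        apply mul_le_mul_of_nonneg_right _ (norm_nonneg _)
        linarith
      refine le_trans (le_trans hsa h1) ?_
      nlinarith [sq_nonneg (‖w (k + 1) - w (k + 2)‖ - ‖w (k + 2) - z‖), hR0]
    have hslb := neg_le_of_abs_le hsR
    nlinarith [hQ, hslb,
      mul_nonneg (by linarith : (0:ℝ) ≤ 1 - 2 * ((1 + β / 4) * r) - 2 * (β / 4))
        (sq_nonneg ‖w (k + 2) - z‖),
      mul_nonneg hε0.le (sq_nonneg ‖w (k + 1) - w (k + 2)‖),
      mul_nonneg hε0.le (sq_nonneg ‖w (k + 2) - z‖)]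
  -- conclusion
  refine ⟨(∑ i ∈ Finset.range (N₁ + N₂ + 3), ‖w i‖) + (‖z‖ + 1 + 2 * G), fun n => ?_⟩
  have hsum0 : 0 ≤ ∑ i ∈ Finset.range (N₁ + N₂ + 3), ‖w i‖ :=
    Finset.sum_nonneg fun i _ => norm_nonneg _
  rcases le_or_gt n (N₁ + N₂ + 2) with hn | hn
  · have h1 : ‖w n‖ ≤ ∑ i ∈ Finset.range (N₁ + N₂ + 3), ‖w i‖ :=
      Finset.single_le_sum (fun i _ => norm_nonneg (w i)) (Finset.mem_range.mpr (by omega))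
    have h2 : (0:ℝ) ≤ ‖z‖ + 1 + 2 * G := by positivity
    linarith
  · have h1 := hfinal n (by omega)
    have h2 : ‖w n - z‖ ≤ 1 + ‖w n - z‖ ^ 2 := by
      nlinarith [sq_nonneg (‖w n - z‖ - 1)]
    have h3 : ‖w n‖ ≤ ‖w n - z‖ + ‖z‖ := by
      calc ‖w n‖ = ‖(w n - z) + z‖ := by rw [sub_add_cancel]
        _ ≤ ‖w n - z‖ + ‖z‖ := norm_add_le _ _
    linarith
end

section
/- Under Assumption A, let β ∈ (0, 1/4), r ∈ (β, (1−2β)/2), let θ satisfy 0 ≤ θ < min{β/2, (1/2 − r)/2}, let {σ_n} be a sequence in (0,1) with lim_{n→∞} σ_n = 0, let {c_n} be a sequence in [0, ∞) with Σ_{n=1}^∞ c_n < ∞, and let δ_0, δ_1 > 0. Given arbitrary v̂, w_0, w_1 ∈ H, let {w_n} satisfy, for all n ≥ 1, the resolvent inclusion σ_n v̂ + (1−σ_n)(w_n + θ(w_n − w_{n−1})) − δ_n T w_n − δ_{n−1}(1−σ_n)(T w_n − T w_{n−1}) − w_{n+1} ∈ δ_n • S(w_{n+1}), where the step sizes δ_n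 obey the adaptive rule: δ_{n+1} = min{ r‖w_n − w_{n+1}‖ / ‖T w_n − T w_{n+1}‖, δ_n + c_n } if T w_n ≠ T w_{n+1}, and δ_{n+1} = δ_n + c_n otherwise. Then the sequence {w_n} is bounded. -/
open Filter Topology
open scoped RealInnerProductSpace Pointwise Classical

set_option maxHeartbeats 4000000

section Helpers
variable {H : Type*} [NormedAddCommGroup H] [InnerProductSpace ℝ H]

private lemma stmt7_inner_ident (a b c : H) :
    2*⟪a-b, b-c⟫ = ‖a-c‖^2 - ‖a-b‖^2 - ‖b-c‖^2 := by
  have h : a - c = (a-b) + (b-c) := by abel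
  rw [h, norm_add_sq_real]; ring

private lemma stmt7_norm_comb (θ : ℝ) (u v : H) :
    ‖(1+θ)•u - θ•v‖^2 = (1+θ)*‖u‖^2 - θ*‖v‖^2 + θ*(1+θ)*‖u-v‖^2 := by
  simp only [← real_inner_self_eq_norm_sq, inner_sub_left, inner_sub_right,
    real_inner_smul_left, real_inner_smul_right, real_inner_comm u v]
  ring

private lemma stmt7_norm_lb (t θ : ℝ) (ht : 0 < t) (hθ : 0 ≤ θ) (u v : H) :
    (1-t)*‖u‖^2 - (1/t-1)*θ^2*‖v‖^2 ≤ ‖u - θ•v‖^2 := by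
  have hexp : ‖u - θ•v‖^2 = ‖u‖^2 - 2*(θ*⟪u,v⟫) + θ^2*‖v‖^2 := by
    rw [norm_sub_sq_real, real_inner_smul_right, norm_smul]
    simp [abs_of_nonneg hθ]; ring
  have hcs : ⟪u,v⟫ ≤ ‖u‖*‖v‖ := real_inner_le_norm u v
  have h2 : θ*⟪u,v⟫ ≤ θ*(‖u‖*‖v‖) := mul_le_mul_of_nonneg_left hcs hθ
  have h5 : 2*(t*‖u‖)*(θ*‖v‖) ≤ t^2*‖u‖^2 + θ^2*‖v‖^2 := by
    nlinarith [sq_nonneg (t*‖u‖ - θ*‖v‖)]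
  have h6 := (div_le_div_iff_of_pos_right ht).mpr h5
  have e1 : (2*(t*‖u‖)*(θ*‖v‖))/t = 2*θ*(‖u‖*‖v‖) := by field_simp
  have e2 : (t^2*‖u‖^2 + θ^2*‖v‖^2)/t = t*‖u‖^2 + (1/t)*θ^2*‖v‖^2 := by
    field_simp
  rw [e1, e2] at h6
  nlinarith [mul_nonneg (mul_nonneg hθ hθ) (sq_nonneg ‖v‖)]

private lemma stmt7_key_ineq (T : H → H) (S : H → Set H)
    (hSmono : ∀ ⦃a b a' b' : H⦄, a' ∈ S a → b' ∈ S b → 0 ≤ ⟪a' - b', a - b⟫)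
    (z : H) (hz : -T z ∈ S z)
    (w0 w1 w2 vhat : H) (σc d0 d1 θ : ℝ) (hd1 : 0 < d1)
    (hiter : σc • vhat + (1 - σc) • (w1 + θ • (w1 - w0)) - d1 • T w1
        - (d0 * (1 - σc)) • (T w1 - T w0) - w2 ∈ d1 • S w2) :
    0 ≤ σc*⟪vhat - w2, w2 - z⟫ + (1-σc)*⟪(w1 + θ•(w1-w0)) - w2, w2 - z⟫
        - d1*⟪T w1 - T z, w2 - z⟫ - d0*(1-σc)*⟪T w1 - T w0, w2 - z⟫ := by
  obtain ⟨s, hs, hseq⟩ := hiter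
  have hseq' : d1 • s = σc • vhat + (1 - σc) • (w1 + θ • (w1 - w0)) - d1 • T w1
      - (d0 * (1 - σc)) • (T w1 - T w0) - w2 := hseq
  have h1 : 0 ≤ ⟪s - (-T z), w2 - z⟫ := hSmono hs hz
  have h2 : 0 ≤ d1 * ⟪s - (-T z), w2 - z⟫ := mul_nonneg hd1.le h1
  rw [← real_inner_smul_left] at h2
  have hveq : d1 • (s - (-T z)) =
      σc • (vhat - w2) + (1-σc) • ((w1 + θ•(w1-w0)) - w2)
        - d1 • (T w1 - T z) - (d0*(1-σc)) • (T w1 - T w0) := by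
    rw [smul_sub, hseq']
    module
  rw [hveq] at h2
  simp only [inner_sub_left, inner_add_left, real_inner_smul_left] at h2 ⊢
  linarith

end Helpers

private lemma stmt7_master (σc θ t γ K M a0 a1 a2 Δ1 Δ2 Y Q X1 X2 X5 X6 X7 X8 d0 d1 vw2 : ℝ)
    (hσ0 : 0 < σc) (hσ1 : σc < 1) (hθ : 0 ≤ θ) (ht : 0 < t) (ht1 : t ≤ 1)
    (hK : 0 ≤ K) (hd1 : 0 ≤ d1)
    (h0 : 0 ≤ σc*X1 + (1-σc)*X2 - d1*(X5 - X6) - d0*(1-σc)*(X7 + X8))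
    (h1 : 2*X1 = M - vw2 - a2) (hvw2 : 0 ≤ vw2)
    (h2 : 2*X2 = Y - Q - a2)
    (hX5 : 0 ≤ X5)
    (hX8 : -(K*Δ1*Δ2) ≤ d0*X8)
    (hY : Y = (1+θ)*a1 - θ*a0 + θ*(1+θ)*Δ1^2)
    (hQ : (1-t)*Δ2^2 - (1/t-1)*θ^2*Δ1^2 ≤ Q)
    (ha1 : 0 ≤ a1)
    (hc1 : γ + (1-σc)*K ≤ (1-σc)*(1-t))
    (hc2 : (1-σc)*θ*(1+θ) + (1/t-1)*θ^2 + (1-σc)*K ≤ (1-σc)*γ) :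
    a2 - θ*a1 - 2*(d1*X6) + γ*Δ2^2 ≤ (1-σc)*(a1 - θ*a0 - 2*(d0*X7) + γ*Δ1^2) + σc*M := by
  have hs : 0 ≤ 1 - σc := by linarith
  have hit : 0 ≤ 1/t - 1 := by
    rw [sub_nonneg, le_div_iff₀ ht]; linarith
  have h1' : σc*(2*X1) = σc*(M - vw2 - a2) := by rw [h1]
  have h2' : (1-σc)*(2*X2) = (1-σc)*(Y - Q - a2) := by rw [h2]
  have e1 : 0 ≤ σc*(M - vw2 - a2) + (1-σc)*(Y - Q - a2) - 2*(d1*X5) + 2*(d1*X6)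
      - 2*((1-σc)*(d0*X7)) - 2*((1-σc)*(d0*X8)) := by linarith [h0, h1', h2']
  have e2 : - (2*((1-σc)*(d0*X8))) ≤ 2*((1-σc)*(K*Δ1*Δ2)) := by
    nlinarith [mul_le_mul_of_nonneg_left hX8 hs]
  have e3 : 2*((1-σc)*(K*Δ1*Δ2)) ≤ (1-σc)*K*Δ1^2 + (1-σc)*K*Δ2^2 := by
    nlinarith [mul_nonneg hs hK, sq_nonneg (Δ1 - Δ2)]
  have e4 : (1-σc)*((1-t)*Δ2^2 - (1/t-1)*θ^2*Δ1^2) ≤ (1-σc)*Q :=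
    mul_le_mul_of_nonneg_left hQ hs
  have e5 : σc * ((1/t-1)*θ^2*Δ1^2) ≥ 0 := by positivity
  have e6 : 0 ≤ 2*(d1*X5) := by nlinarith
  have e7 : 0 ≤ σc*vw2 := by nlinarith
  have main : a2 - 2*(d1*X6) ≤ σc*M + (1-σc)*(Y - 2*(d0*X7))
      - (1-σc)*(1-t)*Δ2^2 + (1/t-1)*θ^2*Δ1^2 + (1-σc)*K*Δ1^2 + (1-σc)*K*Δ2^2 := by
    linarith [e1, e2, e3, e4, e5, e6, e7]
  have c1' : (γ + (1-σc)*K)*Δ2^2 ≤ ((1-σc)*(1-t))*Δ2^2 :=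
    mul_le_mul_of_nonneg_right hc1 (sq_nonneg Δ2)
  have c2' : ((1-σc)*θ*(1+θ) + (1/t-1)*θ^2 + (1-σc)*K)*Δ1^2 ≤ ((1-σc)*γ)*Δ1^2 :=
    mul_le_mul_of_nonneg_right hc2 (sq_nonneg Δ1)
  have e8 : 0 ≤ σc*θ*a1 := by positivity
  have hY' : (1-σc)*Y = (1-σc)*((1+θ)*a1 - θ*a0 + θ*(1+θ)*Δ1^2) := by rw [hY]
  linarith [main, c1', c2', e8, hY']


/-- Boundedness of the inertial forward-reflected-anchored-backward splitting method (Lemma 4.2). -/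
theorem stmt7 {H : Type*} [NormedAddCommGroup H] [InnerProductSpace ℝ H] [CompleteSpace H]
    (T : H → H) (L : ℝ) (hL : 0 < L)
    (hTmono : ∀ a b : H, 0 ≤ ⟪T a - T b, a - b⟫)
    (hTlip : ∀ a b : H, ‖T a - T b‖ ≤ L * ‖a - b‖)
    (S : H → Set H)
    (hSmono : ∀ ⦃a b a' b' : H⦄, a' ∈ S a → b' ∈ S b → 0 ≤ ⟪a' - b', a - b⟫)
    (hSmax : ∀ a a' : H, (∀ b b', b' ∈ S b → 0 ≤ ⟪a' - b', a - b⟫) → a' ∈ S a)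
    (hZ : {z : H | -T z ∈ S z}.Nonempty)
    (β r : ℝ) (hβ : β ∈ Set.Ioo (0 : ℝ) (1 / 4)) (hrr : r ∈ Set.Ioo β ((1 - 2 * β) / 2))
    (θ : ℝ) (hθ0 : 0 ≤ θ) (hθ : θ < min (β / 2) ((1 / 2 - r) / 2))
    (σ : ℕ → ℝ) (hσ : ∀ n, σ n ∈ Set.Ioo (0 : ℝ) 1) (hσ0 : Tendsto σ atTop (𝓝 0))
    (c : ℕ → ℝ) (hc : ∀ n, 0 ≤ c n) (hcsum : Summable fun n => c (n + 1))
    (δ : ℕ → ℝ) (hδ0 : 0 < δ 0) (hδ1 : 0 < δ 1)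
    (vhat : H) (w : ℕ → H)
    (hrule : ∀ n, 1 ≤ n → δ (n + 1) =
      if T (w n) ≠ T (w (n + 1)) then
        min (r * ‖w n - w (n + 1)‖ / ‖T (w n) - T (w (n + 1))‖) (δ n + c n)
      else δ n + c n)
    (hiter : ∀ n, 1 ≤ n →
      σ n • vhat + (1 - σ n) • (w n + θ • (w n - w (n - 1))) - δ n • T (w n)
          - (δ (n - 1) * (1 - σ n)) • (T (w n) - T (w (n - 1))) - w (n + 1)
        ∈ δ n • S (w (n + 1))) :
    ∃ C : ℝ, ∀ n, ‖w n‖ ≤ C := by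
  classical
  obtain ⟨z, hz⟩ := hZ
  obtain ⟨hβ0, hβ4⟩ := hβ
  obtain ⟨hrβ, hr2⟩ := hrr
  have hr0 : 0 < r := hβ0.trans hrβ
  have hr12 : r < 1/2 := by linarith
  have hθβ : θ < β/2 := lt_of_lt_of_le hθ (min_le_left _ _)
  have hθt2 : θ < (1/2 - r)/2 := lt_of_lt_of_le hθ (min_le_right _ _)
  set t : ℝ := 1/2 - r with htdef
  have ht0 : 0 < t := by simp only [htdef]; linarith
  have ht1 : t ≤ 1 := by simp only [htdef]; linarith
  -- arithmetic constants
  have htq : θ^2/t ≤ t/4 := by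
    rw [div_le_iff₀ ht0]; nlinarith [hθt2, hθ0]
  have hE1 : r + θ + θ^2/t < 1/2 := by
    have : θ < t/2 := by simp only [htdef]; linarith
    simp only [htdef] at htq ⊢; nlinarith
  have hE2 : 2*θ + 1/4 < 1/2 := by linarith
  set γ : ℝ := (1/2 + max (r + θ + θ^2/t) (2*θ + 1/4))/2 with hγdef
  have hmaxlt : max (r + θ + θ^2/t) (2*θ + 1/4) < 1/2 := max_lt hE1 hE2
  have hγlt : γ < 1/2 := by simp only [hγdef]; linarith
  have hγgt1 : r + θ + θ^2/t < γ := by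
    have := le_max_left (r + θ + θ^2/t) (2*θ + 1/4)
    simp only [hγdef]; linarith
  have hγgt2 : 2*θ + 1/4 < γ := by
    have := le_max_right (r + θ + θ^2/t) (2*θ + 1/4)
    simp only [hγdef]; linarith
  have hγ0 : 0 < γ := by linarith
  set S0 : ℝ := 1 - 2*θ - 4*r^2 with hS0def
  have hS0 : 0 < S0 := by
    simp only [hS0def]; nlinarith
  set κ : ℝ := min (min 1 ((1/2 - γ)/2)) (min ((γ - (r + θ + θ^2/t))/2) (S0/(16*r+8))) with hκdef
  have hκ0 : 0 < κ := by
    apply lt_min (lt_min one_pos (by linarith))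
    exact lt_min (by linarith) (div_pos hS0 (by linarith))
  have hκ1 : κ ≤ 1 := le_trans (min_le_left _ _) (min_le_left _ _)
  have hκ2 : κ ≤ (1/2 - γ)/2 := le_trans (min_le_left _ _) (min_le_right _ _)
  have hκ3 : κ ≤ (γ - (r + θ + θ^2/t))/2 := le_trans (min_le_right _ _) (min_le_left _ _)
  have hκ4 : κ ≤ S0/(16*r+8) := le_trans (min_le_right _ _) (min_le_right _ _)
  set K : ℝ := r + κ with hKdef
  have hK0 : 0 < K := by simp only [hKdef]; linarith
  have hKr : r < K := by simp only [hKdef]; linarith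
  set η : ℝ := 1 - 2*θ - 4*K^2 with hηdef
  have hη : 0 < η := by
    have h1 : κ*(16*r+8) ≤ S0 := by
      rw [← le_div_iff₀ (by linarith : (0:ℝ) < 16*r+8)]; exact hκ4
    have h2 : κ^2 ≤ κ := by nlinarith
    simp only [hηdef, hKdef, hS0def] at *; nlinarith
  clear_value t γ S0 κ K η
  -- δ facts
  have δpos : ∀ n, 0 < δ n := by
    intro n
    induction n using Nat.strong_induction_on with
    | _ n ih =>
      match n with
      | 0 => exact hδ0
      | 1 => exact hδ1
      | (m+2) =>
        have h1 : 0 < δ (m+1) := ih (m+1) (by omega)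
        rw [hrule (m+1) (by omega)]
        split_ifs with hT
        · apply lt_min
          · apply div_pos
            · apply mul_pos hr0
              rw [norm_pos_iff, sub_ne_zero]
              intro he; exact hT (by rw [he])
            · rw [norm_pos_iff, sub_ne_zero]; exact hT
          · linarith [hc (m+1)]
        · linarith [hc (m+1)]
  have δstep : ∀ n, 1 ≤ n → δ (n+1) ≤ δ n + c n := by
    intro n hn
    rw [hrule n hn]
    split_ifs with hT
    · exact min_le_right _ _
    · exact le_refl _
  set mlb : ℝ := min (min (δ 0) (δ 1)) (r/L) with hmlbdef
  have hmlb0 : 0 < mlb := lt_min (lt_min hδ0 hδ1) (div_pos hr0 hL)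
  have δlb : ∀ n, mlb ≤ δ n := by
    intro n
    induction n using Nat.strong_induction_on with
    | _ n ih =>
      match n with
      | 0 => exact le_trans (min_le_left _ _) (min_le_left _ _)
      | 1 => exact le_trans (min_le_left _ _) (min_le_right _ _)
      | (m+2) =>
        have h1 : mlb ≤ δ (m+1) := ih (m+1) (by omega)
        rw [hrule (m+1) (by omega)]
        split_ifs with hT
        · apply le_min
          · have hTp : 0 < ‖T (w (m+1)) - T (w (m+2))‖ := by
              rw [norm_pos_iff, sub_ne_zero]; exact hT
            have hlip := hTlip (w (m+1)) (w (m+2))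
            have : r/L ≤ r * ‖w (m+1) - w (m+2)‖ / ‖T (w (m+1)) - T (w (m+2))‖ := by
              rw [div_le_div_iff₀ hL hTp]
              nlinarith
            exact le_trans (min_le_right _ _) this
          · linarith [hc (m+1)]
        · linarith [hc (m+1)]
  have ruleineq : ∀ n, 1 ≤ n →
      δ (n+1) * ‖T (w n) - T (w (n+1))‖ ≤ r * ‖w n - w (n+1)‖ := by
    intro n hn
    rw [hrule n hn]
    split_ifs with hT
    · have hTp : 0 < ‖T (w n) - T (w (n+1))‖ := by
        rw [norm_pos_iff, sub_ne_zero]; exact hT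
      calc min (r * ‖w n - w (n+1)‖ / ‖T (w n) - T (w (n+1))‖) (δ n + c n)
            * ‖T (w n) - T (w (n+1))‖
          ≤ (r * ‖w n - w (n+1)‖ / ‖T (w n) - T (w (n+1))‖) * ‖T (w n) - T (w (n+1))‖ :=
            mul_le_mul_of_nonneg_right (min_le_left _ _) hTp.le
        _ = r * ‖w n - w (n+1)‖ := div_mul_cancel₀ _ hTp.ne'
    · push_neg at hT
      rw [hT, sub_self, norm_zero, mul_zero]
      positivity
  -- convergence of δ
  set Csum : ℝ := ∑' k, c (k+1) with hCsumdef
  set g : ℕ → ℝ := fun n => δ (n+1) - ∑ k ∈ Finset.range n, c (k+1) with hgdef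
  have hganti : Antitone g := by
    apply antitone_nat_of_succ_le
    intro n
    have h1 := δstep (n+1) (by omega)
    simp only [hgdef, Finset.sum_range_succ]
    linarith
  have hgbdd : BddBelow (Set.range g) := by
    refine ⟨mlb - Csum, ?_⟩
    rintro x ⟨n, rfl⟩
    have h1 : ∑ k ∈ Finset.range n, c (k+1) ≤ Csum :=
      Summable.sum_le_tsum (Finset.range n) (fun i _ => hc (i+1)) hcsum
    have h2 := δlb (n+1)
    simp only [hgdef]
    linarith
  have hgl : Tendsto g atTop (𝓝 (⨅ n, g n)) := tendsto_atTop_ciInf hganti hgbdd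
  have hps : Tendsto (fun n => ∑ k ∈ Finset.range n, c (k+1)) atTop (𝓝 Csum) :=
    hcsum.hasSum.tendsto_sum_nat
  set dstar : ℝ := (⨅ n, g n) + Csum with hdstardef
  have hδshift : Tendsto (fun n => δ (n+1)) atTop (𝓝 dstar) := by
    have := hgl.add hps
    refine this.congr (fun n => ?_)
    simp only [hgdef]; ring
  have hδlim : Tendsto δ atTop (𝓝 dstar) := (tendsto_add_atTop_iff_nat 1).mp hδshift
  have hdstar : 0 < dstar := lt_of_lt_of_le hmlb0 (ge_of_tendsto' hδlim δlb)
  have hρ : Tendsto (fun n => δ n / δ (n+1)) atTop (𝓝 1) := by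
    have := hδlim.div hδshift hdstar.ne'
    rw [div_self hdstar.ne'] at this; exact this
  -- eventual conditions
  have hev1 : ∀ᶠ n in atTop, δ n / δ (n+1) * r ≤ K := by
    have hlim : Tendsto (fun n => δ n / δ (n+1) * r) atTop (𝓝 (1*r)) := hρ.mul_const r
    rw [one_mul] at hlim
    exact (hlim.eventually_lt_const hKr).mono (fun n h => h.le)
  have hPb : ∀ᶠ k in atTop, δ k * ‖T (w (k+1)) - T (w k)‖ ≤ K * ‖w (k+1) - w k‖ := by
    filter_upwards [hev1, eventually_ge_atTop 1] with k hk hk1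
    have h1 := ruleineq k hk1
    have hpos := δpos (k+1)
    have hδk := δpos k
    have hratio : 0 ≤ δ k / δ (k+1) := by positivity
    have heq : δ k = (δ k / δ (k+1)) * δ (k+1) := by field_simp
    rw [norm_sub_rev (T (w (k+1))), norm_sub_rev (w (k+1))]
    calc δ k * ‖T (w k) - T (w (k+1))‖
        = (δ k / δ (k+1)) * (δ (k+1) * ‖T (w k) - T (w (k+1))‖) := by rw [← mul_assoc, ← heq]
      _ ≤ (δ k / δ (k+1)) * (r * ‖w k - w (k+1)‖) := mul_le_mul_of_nonneg_left h1 hratio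
      _ = (δ k / δ (k+1) * r) * ‖w k - w (k+1)‖ := by ring
      _ ≤ K * ‖w k - w (k+1)‖ := mul_le_mul_of_nonneg_right hk (norm_nonneg _)
  have hσ1lim : Tendsto (fun n => 1 - σ n) atTop (𝓝 1) := by
    have h : Tendsto (fun n => (1:ℝ) - σ n) atTop (𝓝 (1 - 0)) :=
      Tendsto.sub tendsto_const_nhds hσ0
    simpa using h
  have hcond1 : ∀ᶠ n in atTop, γ + (1 - σ n)*K ≤ (1 - σ n)*(1-t) := by
    have hlim : Tendsto (fun n => (1 - σ n)*(1-t-K)) atTop (𝓝 (1-t-K)) := by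
      simpa using hσ1lim.mul_const (1-t-K)
    have hgt : γ < 1-t-K := by simp only [htdef, hKdef]; linarith
    filter_upwards [hlim.eventually_const_lt hgt] with n hn
    have hrng : (1 - σ n)*(1-t-K) = (1 - σ n)*(1-t) - (1 - σ n)*K := by ring
    linarith only [hn, hrng]
  have hcond2 : ∀ᶠ n in atTop,
      (1 - σ n)*θ*(1+θ) + (1/t-1)*θ^2 + (1 - σ n)*K ≤ (1 - σ n)*γ := by
    have hlim : Tendsto (fun n => (1 - σ n)*(γ - θ*(1+θ) - K)) atTop (𝓝 (γ - θ*(1+θ) - K)) := by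
      simpa using hσ1lim.mul_const (γ - θ*(1+θ) - K)
    have hgt : (1/t-1)*θ^2 < γ - θ*(1+θ) - K := by
      have hexp : (1/t-1)*θ^2 = θ^2/t - θ^2 := by ring
      rw [hexp]
      simp only [hKdef]
      linarith [hκ3, hγgt1]
    filter_upwards [hlim.eventually_const_lt hgt] with n hn
    have hrng : (1 - σ n)*(γ - θ*(1+θ) - K) = (1 - σ n)*γ - (1 - σ n)*θ*(1+θ) - (1 - σ n)*K := by
      ring
    linarith only [hn, hrng]
  obtain ⟨N0, hN0⟩ := eventually_atTop.mp ((hPb.and (hcond1.and hcond2)).and (eventually_ge_atTop 1))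
  set N : ℕ := N0 + 1 with hNdef
  have hNfact : ∀ k, N ≤ k →
      (δ k * ‖T (w (k+1)) - T (w k)‖ ≤ K * ‖w (k+1) - w k‖) ∧
      (γ + (1 - σ k)*K ≤ (1 - σ k)*(1-t)) ∧
      ((1 - σ k)*θ*(1+θ) + (1/t-1)*θ^2 + (1 - σ k)*K ≤ (1 - σ k)*γ) := by
    intro k hk
    exact (hN0 k (by omega)).1
  -- Lyapunov function
  set M : ℝ := ‖vhat - z‖^2 with hMdef
  set Γ : ℕ → ℝ := fun k => ‖w k - z‖^2 - θ*‖w (k-1) - z‖^2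
      - 2*(δ (k-1) * ⟪T (w k) - T (w (k-1)), w k - z⟫) + γ*‖w k - w (k-1)‖^2 with hΓdef
  have hΓsucc : ∀ m : ℕ, Γ (m+1) = ‖w (m+1) - z‖^2 - θ*‖w m - z‖^2
      - 2*(δ m * ⟪T (w (m+1)) - T (w m), w (m+1) - z⟫) + γ*‖w (m+1) - w m‖^2 := by
    intro m; simp only [hΓdef, Nat.add_sub_cancel]
  have step : ∀ m, N ≤ m → Γ (m+1+1) ≤ (1 - σ (m+1))*Γ (m+1) + σ (m+1)*M := by
    intro m hm
    obtain ⟨hPbm, -, -⟩ := hNfact m hm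
    obtain ⟨-, hc1m, hc2m⟩ := hNfact (m+1) (by omega)
    have hσm := hσ (m+1)
    have hit := hiter (m+1) (by omega)
    simp only [Nat.add_sub_cancel] at hit
    have h0 := stmt7_key_ineq T S hSmono z hz (w m) (w (m+1)) (w (m+2)) vhat
        (σ (m+1)) (δ m) (δ (m+1)) θ (δpos (m+1)) hit
    have hX3 : ⟪T (w (m+1)) - T z, w (m+2) - z⟫
        = ⟪T (w (m+2)) - T z, w (m+2) - z⟫ - ⟪T (w (m+2)) - T (w (m+1)), w (m+2) - z⟫ := by
      rw [← inner_sub_left]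
      congr 1
      abel
    have hX4 : ⟪T (w (m+1)) - T (w m), w (m+2) - z⟫
        = ⟪T (w (m+1)) - T (w m), w (m+1) - z⟫
          + ⟪T (w (m+1)) - T (w m), w (m+2) - w (m+1)⟫ := by
      rw [← inner_add_right]
      congr 1
      abel
    rw [hX3, hX4] at h0
    have h1 := stmt7_inner_ident vhat (w (m+2)) z
    have h2 := stmt7_inner_ident (w (m+1) + θ•(w (m+1) - w m)) (w (m+2)) z
    have hX5 := hTmono (w (m+2)) z
    have habs := abs_real_inner_le_norm (T (w (m+1)) - T (w m)) (w (m+2) - w (m+1))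
    have hX8 : -(K * ‖w (m+1) - w m‖ * ‖w (m+2) - w (m+1)‖)
        ≤ δ m * ⟪T (w (m+1)) - T (w m), w (m+2) - w (m+1)⟫ := by
      have l0 : -(‖T (w (m+1)) - T (w m)‖ * ‖w (m+2) - w (m+1)‖)
          ≤ ⟪T (w (m+1)) - T (w m), w (m+2) - w (m+1)⟫ := neg_le_of_abs_le habs
      have l1 := mul_le_mul_of_nonneg_left l0 (δpos m).le
      have l2 : δ m * ‖T (w (m+1)) - T (w m)‖ * ‖w (m+2) - w (m+1)‖
          ≤ K * ‖w (m+1) - w m‖ * ‖w (m+2) - w (m+1)‖ :=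
        mul_le_mul_of_nonneg_right hPbm (norm_nonneg _)
      linarith only [l1, l2]
    have hyz : (w (m+1) + θ•(w (m+1) - w m)) - z = (1+θ)•(w (m+1) - z) - θ•(w m - z) := by
      module
    have hww : (w (m+1) - z) - (w m - z) = w (m+1) - w m := by abel
    have hY : ‖(w (m+1) + θ•(w (m+1) - w m)) - z‖^2
        = (1+θ)*‖w (m+1) - z‖^2 - θ*‖w m - z‖^2 + θ*(1+θ)*‖w (m+1) - w m‖^2 := by
      rw [hyz, stmt7_norm_comb, hww]
    have hyw : (w (m+1) + θ•(w (m+1) - w m)) - w (m+2)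
        = -((w (m+2) - w (m+1)) - θ•(w (m+1) - w m)) := by module
    have hQ : (1-t)*‖w (m+2) - w (m+1)‖^2 - (1/t-1)*θ^2*‖w (m+1) - w m‖^2
        ≤ ‖(w (m+1) + θ•(w (m+1) - w m)) - w (m+2)‖^2 := by
      rw [hyw, norm_neg]
      exact stmt7_norm_lb t θ ht0 hθ0 _ _
    have hmas := stmt7_master (σ (m+1)) θ t γ K M
        (‖w m - z‖^2) (‖w (m+1) - z‖^2) (‖w (m+2) - z‖^2)
        (‖w (m+1) - w m‖) (‖w (m+2) - w (m+1)‖)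
        (‖(w (m+1) + θ•(w (m+1) - w m)) - z‖^2)
        (‖(w (m+1) + θ•(w (m+1) - w m)) - w (m+2)‖^2)
        (⟪vhat - w (m+2), w (m+2) - z⟫)
        (⟪(w (m+1) + θ•(w (m+1) - w m)) - w (m+2), w (m+2) - z⟫)
        (⟪T (w (m+2)) - T z, w (m+2) - z⟫) (⟪T (w (m+2)) - T (w (m+1)), w (m+2) - z⟫)
        (⟪T (w (m+1)) - T (w m), w (m+1) - z⟫) (⟪T (w (m+1)) - T (w m), w (m+2) - w (m+1)⟫)
        (δ m) (δ (m+1)) (‖vhat - w (m+2)‖^2)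
        hσm.1 hσm.2 hθ0 ht0 ht1 hK0.le (δpos (m+1)).le
        (by linarith only [h0]) h1 (by positivity) h2 hX5 hX8 hY hQ (by positivity) hc1m hc2m
    rw [hΓsucc (m+1), hΓsucc m]
    linarith only [hmas]
  have coer : ∀ m, N ≤ m → η*‖w (m+1) - z‖^2 ≤ Γ (m+1) := by
    intro m hm
    obtain ⟨hPbm, -, -⟩ := hNfact m hm
    rw [hΓsucc m]
    have htri : ‖w m - z‖ ≤ ‖w (m+1) - w m‖ + ‖w (m+1) - z‖ := by
      have h : w m - z = -(w (m+1) - w m) + (w (m+1) - z) := by abel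
      rw [h]
      exact le_trans (norm_add_le _ _) (by rw [norm_neg])
    have ha0 : ‖w m - z‖^2 ≤ (‖w (m+1) - w m‖ + ‖w (m+1) - z‖)^2 :=
      pow_le_pow_left₀ (norm_nonneg _) htri 2
    have hcs := real_inner_le_norm (T (w (m+1)) - T (w m)) (w (m+1) - z)
    have hi1 : δ m * ⟪T (w (m+1)) - T (w m), w (m+1) - z⟫
        ≤ K * ‖w (m+1) - w m‖ * ‖w (m+1) - z‖ := by
      have l1 := mul_le_mul_of_nonneg_left hcs (δpos m).le
      have l2 : δ m * ‖T (w (m+1)) - T (w m)‖ * ‖w (m+1) - z‖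
          ≤ K * ‖w (m+1) - w m‖ * ‖w (m+1) - z‖ :=
        mul_le_mul_of_nonneg_right hPbm (norm_nonneg _)
      linarith only [l1, l2]
    have hθa := mul_le_mul_of_nonneg_left ha0 hθ0
    have hγ2 : (2*θ + 1/4)*‖w (m+1) - w m‖^2 ≤ γ*‖w (m+1) - w m‖^2 :=
      mul_le_mul_of_nonneg_right (le_of_lt hγgt2) (sq_nonneg _)
    simp only [hηdef]
    nlinarith only [mul_nonneg hθ0 (sq_nonneg (‖w (m+1) - z‖ - ‖w (m+1) - w m‖)),
      sq_nonneg (2*K*‖w (m+1) - z‖ - ‖w (m+1) - w m‖/2), hγ2, hθa, hi1]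
  set B : ℝ := max (Γ (N+1)) M with hBdef
  have hB : ∀ n, N+1 ≤ n → Γ n ≤ B := by
    intro n hn
    induction n, hn using Nat.le_induction with
    | base => exact le_max_left _ _
    | succ n hn ih =>
      obtain ⟨m, rfl⟩ : ∃ m, n = m+1 := ⟨n-1, by omega⟩
      have hst := step m (by omega)
      have hσm := hσ (m+1)
      have hMB : M ≤ B := le_max_right _ _
      have l1 : (1 - σ (m+1))*Γ (m+1) ≤ (1 - σ (m+1))*B :=
        mul_le_mul_of_nonneg_left ih (by linarith [hσm.2])
      have l2 : σ (m+1)*M ≤ σ (m+1)*B := mul_le_mul_of_nonneg_left hMB (le_of_lt hσm.1)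
      calc Γ (m+1+1) ≤ (1 - σ (m+1))*Γ (m+1) + σ (m+1)*M := hst
        _ ≤ (1 - σ (m+1))*B + σ (m+1)*B := by linarith only [l1, l2]
        _ = B := by ring
  have habound : ∀ n, N+1 ≤ n → ‖w n - z‖ ≤ Real.sqrt (B/η) := by
    intro n hn
    obtain ⟨m, rfl⟩ : ∃ m, n = m+1 := ⟨n-1, by omega⟩
    have h1 := coer m (by omega)
    have h2 := hB (m+1) hn
    have h3 : ‖w (m+1) - z‖^2 ≤ B/η := by
      rw [le_div_iff₀ hη]; linarith only [h1, h2]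
    calc ‖w (m+1) - z‖ = Real.sqrt (‖w (m+1) - z‖^2) := (Real.sqrt_sq (norm_nonneg _)).symm
      _ ≤ Real.sqrt (B/η) := Real.sqrt_le_sqrt h3
  have hfin : ∀ Nf : ℕ, ∃ C0 : ℝ, ∀ k < Nf, ‖w k‖ ≤ C0 := by
    intro Nf
    induction Nf with
    | zero => exact ⟨0, fun k hk => absurd hk (by omega)⟩
    | succ Nf ih =>
      obtain ⟨C0, hC0⟩ := ih
      refine ⟨max C0 ‖w Nf‖, fun k hk => ?_⟩
      rcases lt_or_eq_of_le (Nat.lt_succ_iff.mp hk) with h | h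
      · exact le_trans (hC0 k h) (le_max_left _ _)
      · rw [h]; exact le_max_right _ _
  obtain ⟨C0, hC0⟩ := hfin (N+1)
  refine ⟨max C0 (‖z‖ + Real.sqrt (B/η)), fun n => ?_⟩
  rcases lt_or_ge n (N+1) with h | h
  · exact le_trans (hC0 n h) (le_max_left _ _)
  · have h1 := habound n h
    have h2 : ‖w n‖ ≤ ‖w n - z‖ + ‖z‖ := by
      have he : w n = (w n - z) + z := by abel
      calc ‖w n‖ = ‖(w n - z) + z‖ := by rw [← he]
        _ ≤ ‖w n - z‖ + ‖z‖ := norm_add_le _ _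
    exact le_trans (by linarith) (le_max_right _ _)
end

section
/- Under Assumption A, let U : H → H be a contraction with constant κ ∈ [0, 1/2), let β ∈ (0, 1/4), r ∈ (β, (1−2β)/2), let {σ_n} be a sequence in (0,1) with lim_{n→∞} σ_n = 0, let {c_n} be a sequence in [0, ∞) with Σ_{n=1}^∞ c_n < ∞, and let δ_0, δ_1 > 0. Given arbitrary w_0, w_1 ∈ H, let {w_n} satisfy, for all n ≥ 1, the resolvent inclusion σ_n U w_n + (1−σ_n) w_n − δ_n T w_n − δ_{n−1}(1 − σ_n(1−2κ))(T w_n − T w_{n−1}) − w_{n+1} ∈ δ_n • S(w_{n+1}), where the step sizes δ_n obey the adaptive rule: δ_{n+1} = min{ r‖w_n − w_{n+1}‖ / ‖T w_n − T w_{n+1}‖, δ_n + c_n } if T w_n ≠ T w_{n+1}, and δ_{n+1} = δ_n + c_n otherwise. Then the sequence {w_n} is bounded. -/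
open Filter Topology
open scoped RealInnerProductSpace Pointwise Classical

private lemma inner_aux {H : Type*} [NormedAddCommGroup H] [InnerProductSpace ℝ H]
    (a b c : H) : 2 * ⟪b - a, b - c⟫ = ‖b - a‖^2 + ‖b - c‖^2 - ‖a - c‖^2 := by
  have h : ‖a - c‖^2 = ‖b - c‖ ^ 2 - 2 * ⟪b - c, b - a⟫ + ‖b - a‖ ^ 2 := by
    rw [← norm_sub_sq_real (b-c) (b-a)]; congr 1; abel
  rw [real_inner_comm (b-a) (b-c)] at h
  linarith

set_option maxHeartbeats 1600000 in
/-- Boundedness of the viscosity-type forward-reflected-backward splitting method (Lemma 5.2). -/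
theorem stmt10 {H : Type*} [NormedAddCommGroup H] [InnerProductSpace ℝ H] [CompleteSpace H]
    (T : H → H) (L : ℝ) (hL : 0 < L)
    (hTmono : ∀ a b : H, 0 ≤ ⟪T a - T b, a - b⟫)
    (hTlip : ∀ a b : H, ‖T a - T b‖ ≤ L * ‖a - b‖)
    (S : H → Set H)
    (hSmono : ∀ ⦃a b a' b' : H⦄, a' ∈ S a → b' ∈ S b → 0 ≤ ⟪a' - b', a - b⟫)
    (hSmax : ∀ a a' : H, (∀ b b', b' ∈ S b → 0 ≤ ⟪a' - b', a - b⟫) → a' ∈ S a)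
    (hZ : {z : H | -T z ∈ S z}.Nonempty)
    (U : H → H) (κ : ℝ) (hκ0 : 0 ≤ κ) (hκ : κ < 1 / 2)
    (hU : ∀ a b : H, ‖U a - U b‖ ≤ κ * ‖a - b‖)
    (β r : ℝ) (hβ : β ∈ Set.Ioo (0 : ℝ) (1 / 4)) (hrr : r ∈ Set.Ioo β ((1 - 2 * β) / 2))
    (σ : ℕ → ℝ) (hσ : ∀ n, σ n ∈ Set.Ioo (0 : ℝ) 1) (hσ0 : Tendsto σ atTop (𝓝 0))
    (c : ℕ → ℝ) (hc : ∀ n, 0 ≤ c n) (hcsum : Summable fun n => c (n + 1))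
    (δ : ℕ → ℝ) (hδ0 : 0 < δ 0) (hδ1 : 0 < δ 1)
    (w : ℕ → H)
    (hrule : ∀ n, 1 ≤ n → δ (n + 1) =
      if T (w n) ≠ T (w (n + 1)) then
        min (r * ‖w n - w (n + 1)‖ / ‖T (w n) - T (w (n + 1))‖) (δ n + c n)
      else δ n + c n)
    (hiter : ∀ n, 1 ≤ n →
      σ n • U (w n) + (1 - σ n) • w n - δ n • T (w n)
          - (δ (n - 1) * (1 - σ n * (1 - 2 * κ))) • (T (w n) - T (w (n - 1))) - w (n + 1)
        ∈ δ n • S (w (n + 1))) :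
    ∃ C : ℝ, ∀ n, ‖w n‖ ≤ C := by
  obtain ⟨z, hz⟩ := hZ
  simp only [Set.mem_setOf_eq] at hz
  have hr0 : 0 < r := hβ.1.trans hrr.1
  have hr12 : r < 1/2 := by
    have h1 := hβ.1; have h2 := hrr.2; simp only [Set.mem_Ioo] at *; linarith
  set r' : ℝ := (r + 1/2)/2 with hr'def
  have hrr' : r < r' := by rw [hr'def]; linarith
  have hr'2 : r' < 1/2 := by rw [hr'def]; linarith
  have hr'0 : 0 < r' := lt_trans hr0 hrr'
  have hκ1 : (0:ℝ) < 1 - κ := by linarith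
  have hκ2 : (0:ℝ) < 1 - 2*κ := by linarith
  -- lower bound for δ
  set dmin : ℝ := min (δ 1) (r / L) with hdmindef
  have hdminpos : 0 < dmin := lt_min hδ1 (div_pos hr0 hL)
  have hdlb : ∀ n, 1 ≤ n → dmin ≤ δ n := by
    intro n hn
    induction n, hn using Nat.le_induction with
    | base => exact min_le_left _ _
    | succ n hn ih =>
      rw [hrule n hn]
      have hup : dmin ≤ δ n + c n := le_trans ih (by linarith [hc n])
      split_ifs with h
      · refine le_min ?_ hup
        have hne : T (w n) - T (w (n+1)) ≠ 0 := sub_ne_zero.mpr h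
        have h1 : 0 < ‖T (w n) - T (w (n+1))‖ := norm_pos_iff.mpr hne
        have h2 : ‖T (w n) - T (w (n+1))‖ ≤ L * ‖w n - w (n+1)‖ := hTlip _ _
        refine le_trans (min_le_right (δ 1) _) ?_
        rw [div_le_div_iff₀ hL h1]
        nlinarith
      · exact hup
  have hδpos : ∀ n, 1 ≤ n → 0 < δ n := fun n hn => lt_of_lt_of_le hdminpos (hdlb n hn)
  have hstep : ∀ k : ℕ, δ (k+2) ≤ δ (k+1) + c (k+1) := by
    intro k
    rw [hrule (k+1) (by omega)]
    split_ifs with h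
    · exact min_le_right _ _
    · exact le_refl _
  -- convergence of δ
  set tail : ℕ → ℝ := fun k => ∑' j, c (j + k + 1) with htaildef
  have htsummable : ∀ k, Summable (fun j => c (j + k + 1)) := by
    intro k
    exact (summable_nat_add_iff (f := fun n => c (n+1)) k).mpr hcsum
  have htail0 : ∀ k, 0 ≤ tail k := fun k => tsum_nonneg (fun j => hc _)
  have htailrec : ∀ k, tail k = c (k+1) + tail (k+1) := by
    intro k
    have h := Summable.tsum_eq_zero_add (htsummable k)
    simp only [htaildef] at h ⊢
    rw [h]
    congr 1
    · norm_num
    · apply tsum_congr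
      intro j
      congr 1
      omega
  set e : ℕ → ℝ := fun k => δ (k+1) + tail k with hedef
  have heanti : Antitone e := by
    apply antitone_nat_of_succ_le
    intro k
    have h1 := hstep k
    have h2 := htailrec k
    simp only [hedef]
    linarith
  have hebdd : BddBelow (Set.range e) := by
    refine ⟨dmin, ?_⟩
    rintro x ⟨k, rfl⟩
    have h1 := hdlb (k+1) (by omega)
    have h2 := htail0 k
    simp only [hedef]
    linarith
  have heconv : Tendsto e atTop (𝓝 (⨅ k, e k)) := tendsto_atTop_ciInf heanti hebdd
  set dstar : ℝ := ⨅ k, e k with hdstardef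
  have hdstarpos : dmin ≤ dstar := by
    apply le_ciInf
    intro k
    have h1 := hdlb (k+1) (by omega)
    have h2 := htail0 k
    simp only [hedef]
    linarith
  have htailtend : Tendsto tail atTop (𝓝 0) := by
    have h := tendsto_sum_nat_add (f := fun n => c (n+1))
    have heq : (fun i => ∑' (k : ℕ), c (k + i + 1)) = tail := by
      funext i
      simp only [htaildef]
    rwa [heq] at h
  have hδconv : Tendsto (fun k => δ (k+1)) atTop (𝓝 dstar) := by
    have h := heconv.sub htailtend
    rw [sub_zero] at h
    have heq : (fun k => e k - tail k) = fun k => δ (k+1) := by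
      funext k
      simp only [hedef]
      ring
    rwa [heq] at h
  have hdstar0 : 0 < dstar := lt_of_lt_of_le hdminpos hdstarpos
  have hratio : Tendsto (fun k => r * (δ (k+1) / δ (k+2))) atTop (𝓝 r) := by
    have h2 : Tendsto (fun k => δ (k+2)) atTop (𝓝 dstar) := by
      have h := hδconv.comp (tendsto_add_atTop_nat 1)
      have heq : ((fun k => δ (k+1)) ∘ (fun k => k + 1)) = fun k => δ (k+2) := by
        funext k
        simp only [Function.comp_apply]
      rwa [heq] at h
    have h3 := hδconv.div h2 (ne_of_gt hdstar0)
    have h4 : dstar / dstar = 1 := div_self (ne_of_gt hdstar0)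
    rw [h4] at h3
    have h5 := h3.const_mul r
    simpa using h5
  obtain ⟨N1, hN1⟩ := eventually_atTop.mp (hratio.eventually_lt_const hrr')
  obtain ⟨N2, hN2⟩ := eventually_atTop.mp (hσ0.eventually_lt_const (show (0:ℝ) < 1/2 - r' by linarith))
  set N : ℕ := max (N1+1) (max N2 1) with hNdef
  have hN1' : 1 ≤ N := le_trans (le_max_right N2 1) (le_max_right _ _)
  have hgood : ∀ m, N ≤ m → r * δ m ≤ r' * δ (m+1) := by
    intro m hm
    obtain ⟨k, rfl⟩ : ∃ k, m = k + 1 := ⟨m - 1, by omega⟩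
    have h1 := hN1 k (by omega)
    have hp := hδpos (k+2) (by omega)
    rw [← mul_div_assoc] at h1
    have h2 := (div_lt_iff₀ hp).mp h1
    show r * δ (k+1) ≤ r' * δ (k+2)
    linarith
  have hσsmall : ∀ m, N ≤ m → σ m ≤ 1/2 - r' := by
    intro m hm
    exact le_of_lt (hN2 m (le_trans (le_trans (le_max_left N2 1) (le_max_right _ _)) hm))
  -- step-size inequality
  have hPb : ∀ k, 1 ≤ k → δ (k+1) * ‖T (w (k+1)) - T (w k)‖ ≤ r * ‖w (k+1) - w k‖ := by
    intro k hk
    by_cases h : T (w k) ≠ T (w (k+1))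
    · have hne : T (w k) - T (w (k+1)) ≠ 0 := sub_ne_zero.mpr h
      have h1 : 0 < ‖T (w k) - T (w (k+1))‖ := norm_pos_iff.mpr hne
      have h2 : δ (k+1) ≤ r * ‖w k - w (k+1)‖ / ‖T (w k) - T (w (k+1))‖ := by
        rw [hrule k hk, if_pos h]; exact min_le_left _ _
      rw [norm_sub_rev (T (w (k+1))), norm_sub_rev (w (k+1))]
      calc δ (k+1) * ‖T (w k) - T (w (k+1))‖
          ≤ (r * ‖w k - w (k+1)‖ / ‖T (w k) - T (w (k+1))‖) * ‖T (w k) - T (w (k+1))‖ :=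
            mul_le_mul_of_nonneg_right h2 (norm_nonneg _)
        _ = r * ‖w k - w (k+1)‖ := div_mul_cancel₀ _ (ne_of_gt h1)
    · push_neg at h
      have h0 : T (w (k+1)) - T (w k) = 0 := by rw [h, sub_self]
      rw [h0, norm_zero, mul_zero]
      positivity
  have hP' : ∀ k, N ≤ k → δ k * ‖T (w (k+1)) - T (w k)‖ ≤ r' * ‖w (k+1) - w k‖ := by
    intro k hk
    have h1 := hgood k hk
    have h2 := hPb k (le_trans hN1' hk)
    have hnn : (0:ℝ) ≤ ‖T (w (k+1)) - T (w k)‖ := norm_nonneg _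
    have ha := mul_le_mul_of_nonneg_right h1 hnn
    have hb := mul_le_mul_of_nonneg_left h2 hr'0.le
    have h3 : r * (δ k * ‖T (w (k+1)) - T (w k)‖) ≤ r * (r' * ‖w (k+1) - w k‖) := by
      linarith only [ha, hb]
    exact le_of_mul_le_mul_left h3 hr0
  -- main quantities
  set E : ℝ := ‖U z - z‖^2 / (1 - κ) with hEdef
  set M : ℝ := E / (1 - 2*κ) with hMdef
  have hE0 : 0 ≤ E := div_nonneg (sq_nonneg _) hκ1.le
  have hM0 : 0 ≤ M := div_nonneg hE0 hκ2.le
  have hEM : E = M * (1 - 2*κ) := (div_mul_cancel₀ _ (ne_of_gt hκ2)).symm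
  set Γ : ℕ → ℝ := fun k => ‖w (k+1) - z‖^2
      - 2 * δ k * ⟪T (w (k+1)) - T (w k), w (k+1) - z⟫
      + (1/2) * ‖w (k+1) - w k‖^2 with hΓdef
  -- key one-step inequality
  have key : ∀ k, N ≤ k → Γ (k+1) ≤ (1 - σ (k+1) * (1 - 2*κ)) * Γ k + σ (k+1) * E := by
    intro k hk
    have hk1 : 1 ≤ k := le_trans hN1' hk
    obtain ⟨s, hsS, hs⟩ := Set.mem_smul_set.mp (hiter (k+1) (by omega))
    simp only [Nat.add_sub_cancel] at hs
    have hδp : 0 < δ (k+1) := hδpos _ (by omega)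
    have hδkp : 0 < δ k := hδpos _ hk1
    have hσp := (hσ (k+1)).1
    have hσ1 := (hσ (k+1)).2
    have hσsm : σ (k+1) ≤ 1/2 - r' := hσsmall (k+1) (by omega)
    set ε : ℝ := 1 - σ (k+1) * (1 - 2*κ) with hεdef
    have hσκ1 : σ (k+1) * (1 - 2*κ) ≤ σ (k+1) * 1 :=
      mul_le_mul_of_nonneg_left (by linarith only [hκ0]) hσp.le
    have hσκ0 : 0 ≤ σ (k+1) * (1 - 2*κ) := mul_nonneg hσp.le hκ2.le
    have hε1 : ε ≤ 1 := by rw [hεdef]; linarith only [hσκ0]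
    have hε0 : 0 < ε := by rw [hεdef]; linarith only [hσκ1, hσ1]
    have hε2r : 2 * r' ≤ ε := by rw [hεdef]; linarith only [hσκ1, hσsm, hr'2]
    have h1 : (0:ℝ) ≤ ⟪s - -T z, w (k+2) - z⟫ := hSmono hsS hz
    have h2 : (0:ℝ) ≤ ⟪T (w (k+2)) - T z, w (k+2) - z⟫ := hTmono _ _
    have hvec : δ (k+1) • (s - -T z) + δ (k+1) • (T (w (k+2)) - T z)
        = σ (k+1) • (U (w (k+1)) - w (k+1)) - (w (k+2) - w (k+1))
          + δ (k+1) • (T (w (k+2)) - T (w (k+1)))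
          - (δ k * ε) • (T (w (k+1)) - T (w k)) := by
      rw [smul_sub (δ (k+1)) s (-T z), hs, hεdef]
      module
    have hkey0 : (0:ℝ) ≤ σ (k+1) * ⟪U (w (k+1)) - w (k+1), w (k+2) - z⟫
        - ⟪w (k+2) - w (k+1), w (k+2) - z⟫
        + δ (k+1) * ⟪T (w (k+2)) - T (w (k+1)), w (k+2) - z⟫
        - (δ k * ε) * ⟪T (w (k+1)) - T (w k), w (k+2) - z⟫ := by
      have e1 : (0:ℝ) ≤ ⟪δ (k+1) • (s - -T z) + δ (k+1) • (T (w (k+2)) - T z), w (k+2) - z⟫ := by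
        rw [inner_add_left, real_inner_smul_left, real_inner_smul_left]
        have q1 := mul_nonneg hδp.le h1
        have q2 := mul_nonneg hδp.le h2
        linarith only [q1, q2]
      rw [hvec] at e1
      simp only [inner_sub_left, inner_add_left, real_inner_smul_left] at e1 ⊢
      linarith only [e1]
    -- decompositions
    have hUdec : ⟪U (w (k+1)) - w (k+1), w (k+2) - z⟫
        = ⟪U (w (k+1)) - U z, w (k+2) - z⟫ + ⟪U z - z, w (k+2) - z⟫
          - ⟪w (k+1) - z, w (k+2) - z⟫ := by
      rw [show U (w (k+1)) - w (k+1)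
          = (U (w (k+1)) - U z) + (U z - z) - (w (k+1) - z) by abel]
      rw [inner_sub_left, inner_add_left]
    have hPdec : ⟪T (w (k+1)) - T (w k), w (k+2) - z⟫
        = ⟪T (w (k+1)) - T (w k), w (k+1) - z⟫
          + ⟪T (w (k+1)) - T (w k), w (k+2) - w (k+1)⟫ := by
      rw [← inner_add_right]
      congr 1
      abel
    rw [hUdec, hPdec] at hkey0
    -- identities
    have hid1 : 2 * ⟪w (k+2) - w (k+1), w (k+2) - z⟫
        = ‖w (k+2) - w (k+1)‖^2 + ‖w (k+2) - z‖^2 - ‖w (k+1) - z‖^2 :=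
      inner_aux (w (k+1)) (w (k+2)) z
    have hid2 : 2 * ⟪w (k+1) - z, w (k+2) - z⟫
        = ‖w (k+1) - z‖^2 + ‖w (k+2) - z‖^2 - ‖w (k+1) - w (k+2)‖^2 := by
      have h := inner_aux (w (k+1)) z (w (k+2))
      rw [← neg_sub (w (k+1)) z, ← neg_sub (w (k+2)) z, inner_neg_neg, norm_neg, norm_neg] at h
      linarith
    have hid2' : 2 * σ (k+1) * ⟪w (k+1) - z, w (k+2) - z⟫
        = σ (k+1) * (‖w (k+1) - z‖^2 + ‖w (k+2) - z‖^2 - ‖w (k+2) - w (k+1)‖^2) := by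
      rw [norm_sub_rev (w (k+2)) (w (k+1))]
      linear_combination σ (k+1) * hid2
    -- bounds
    have hF4 : ⟪U (w (k+1)) - U z, w (k+2) - z⟫ ≤ κ * (‖w (k+1) - z‖ * ‖w (k+2) - z‖) := by
      have hcs := real_inner_le_norm (U (w (k+1)) - U z) (w (k+2) - z)
      have hu := hU (w (k+1)) z
      have hm := mul_le_mul_of_nonneg_right hu (norm_nonneg (w (k+2) - z))
      linarith only [hcs, hm]
    have t1 : 2 * σ (k+1) * ⟪U (w (k+1)) - U z, w (k+2) - z⟫
        ≤ σ (k+1) * κ * (‖w (k+1) - z‖^2 + ‖w (k+2) - z‖^2) := by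
      have p1 := mul_le_mul_of_nonneg_left hF4 (show (0:ℝ) ≤ 2 * σ (k+1) by positivity)
      have hxy : 2 * (‖w (k+1) - z‖ * ‖w (k+2) - z‖)
          ≤ ‖w (k+1) - z‖^2 + ‖w (k+2) - z‖^2 := by
        linarith only [sq_nonneg (‖w (k+1) - z‖ - ‖w (k+2) - z‖)]
      have p2 := mul_le_mul_of_nonneg_left hxy (mul_nonneg hσp.le hκ0)
      linarith only [p1, p2]
    have hF5 : ⟪U z - z, w (k+2) - z⟫ ≤ ‖U z - z‖ * ‖w (k+2) - z‖ :=
      real_inner_le_norm _ _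
    have hbase : 2 * (‖U z - z‖ * ‖w (k+2) - z‖) ≤ (1-κ) * ‖w (k+2) - z‖^2 + E := by
      have hE : E * (1-κ) = ‖U z - z‖^2 := div_mul_cancel₀ _ (ne_of_gt hκ1)
      nlinarith only [sq_nonneg ((1-κ) * ‖w (k+2) - z‖ - ‖U z - z‖), hκ1, hE]
    have t2 : 2 * σ (k+1) * ⟪U z - z, w (k+2) - z⟫
        ≤ σ (k+1) * (1-κ) * ‖w (k+2) - z‖^2 + σ (k+1) * E := by
      have p1 := mul_le_mul_of_nonneg_left hF5 (show (0:ℝ) ≤ 2 * σ (k+1) by positivity)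
      have p2 := mul_le_mul_of_nonneg_left hbase hσp.le
      linarith only [p1, p2]
    have hF7 : -(‖T (w (k+1)) - T (w k)‖ * ‖w (k+2) - w (k+1)‖)
        ≤ ⟪T (w (k+1)) - T (w k), w (k+2) - w (k+1)⟫ :=
      (abs_le.mp (abs_real_inner_le_norm _ _)).1
    have hP'k := hP' k hk
    have h34 : δ k * (-⟪T (w (k+1)) - T (w k), w (k+2) - w (k+1)⟫)
        ≤ r' * ‖w (k+1) - w k‖ * ‖w (k+2) - w (k+1)‖ := by
      have ha : -⟪T (w (k+1)) - T (w k), w (k+2) - w (k+1)⟫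
          ≤ ‖T (w (k+1)) - T (w k)‖ * ‖w (k+2) - w (k+1)‖ := by linarith
      have hb := mul_le_mul_of_nonneg_left ha hδkp.le
      have hc2 := mul_le_mul_of_nonneg_right hP'k (norm_nonneg (w (k+2) - w (k+1)))
      linarith only [hb, hc2]
    have t3 : -(2 * (δ k * ε) * ⟪T (w (k+1)) - T (w k), w (k+2) - w (k+1)⟫)
        ≤ r' * (‖w (k+1) - w k‖^2 + ‖w (k+2) - w (k+1)‖^2) := by
      have h35 : (0:ℝ) ≤ r' * ‖w (k+1) - w k‖ * ‖w (k+2) - w (k+1)‖ := by positivity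
      have p1 := mul_le_mul_of_nonneg_left h34 (show (0:ℝ) ≤ 2*ε by positivity)
      have p2 := mul_le_mul_of_nonneg_right (show 2*ε ≤ 2 by linarith) h35
      have p3 : 2 * (r' * ‖w (k+1) - w k‖ * ‖w (k+2) - w (k+1)‖)
          ≤ r' * (‖w (k+1) - w k‖^2 + ‖w (k+2) - w (k+1)‖^2) := by
        linarith only [mul_nonneg hr'0.le (sq_nonneg (‖w (k+1) - w k‖ - ‖w (k+2) - w (k+1)‖))]
      linarith only [p1, p2, p3]
    -- epsilon expansions
    have hεx : ε * ‖w (k+1) - z‖^2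
        = ‖w (k+1) - z‖^2 - σ (k+1) * ‖w (k+1) - z‖^2
          + 2 * (σ (k+1) * κ) * ‖w (k+1) - z‖^2 := by
      rw [hεdef]; ring
    have hεv : ε * ‖w (k+1) - w k‖^2
        = ‖w (k+1) - w k‖^2 - σ (k+1) * ‖w (k+1) - w k‖^2
          + 2 * (σ (k+1) * κ) * ‖w (k+1) - w k‖^2 := by
      rw [hεdef]; ring
    have hX : (0:ℝ) ≤ σ (k+1) * κ * ‖w (k+1) - z‖^2 := by positivity
    have hU2 : (0:ℝ) ≤ (1/2 - r' - σ (k+1)) * ‖w (k+2) - w (k+1)‖^2 :=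
      mul_nonneg (by linarith) (sq_nonneg _)
    have hV : (0:ℝ) ≤ (ε - 2*r') * ‖w (k+1) - w k‖^2 :=
      mul_nonneg (by linarith) (sq_nonneg _)
    simp only [hΓdef]
    simp only [show k+1+1 = k+2 from rfl]
    clear_value ε E r'
    linarith only [hkey0, hid1, hid2', t1, t2, t3, hεx, hX, hU2, hV]
  -- Γ is bounded
  have hΓbd : ∀ k, N ≤ k → Γ k ≤ max (Γ N) M := by
    intro k hk
    induction k, hk using Nat.le_induction with
    | base => exact le_max_left _ _
    | succ k hk ih =>
      have h := key k hk
      have hσp := (hσ (k+1)).1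
      have hσ1 := (hσ (k+1)).2
      have ht0 : 0 < σ (k+1) * (1 - 2*κ) := mul_pos hσp hκ2
      have hσκ1 : σ (k+1) * (1 - 2*κ) ≤ σ (k+1) * 1 :=
        mul_le_mul_of_nonneg_left (by linarith only [hκ0]) hσp.le
      have ht1 : σ (k+1) * (1 - 2*κ) ≤ 1 := by linarith only [hσκ1, hσ1]
      have hM' : M ≤ max (Γ N) M := le_max_right _ _
      have hEq : σ (k+1) * E = σ (k+1) * (1 - 2*κ) * M := by rw [hEM]; ring
      have q1 := mul_le_mul_of_nonneg_left ih
        (show (0:ℝ) ≤ 1 - σ (k+1) * (1 - 2*κ) by linarith)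
      have q2 := mul_le_mul_of_nonneg_left hM' ht0.le
      linarith only [h, q1, q2, hEq]
  -- lower bound for Γ
  have hlow : ∀ k, N ≤ k → ‖w (k+1) - z‖^2 ≤ 2 * Γ k := by
    intro k hk
    have hp := hP' k hk
    have hδkp := hδpos k (le_trans hN1' hk)
    have hcs := real_inner_le_norm (T (w (k+1)) - T (w k)) (w (k+1) - z)
    have hb := mul_le_mul_of_nonneg_left hcs hδkp.le
    have hc2 := mul_le_mul_of_nonneg_right hp (norm_nonneg (w (k+1) - z))
    simp only [hΓdef]
    linarith only [hb, hc2, sq_nonneg (‖w (k+1) - z‖ - ‖w (k+1) - w k‖),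
      mul_nonneg (show (0:ℝ) ≤ 2 - 4*r' by linarith only [hr'2])
        (mul_nonneg (norm_nonneg (w (k+1) - w k)) (norm_nonneg (w (k+1) - z)))]
  -- conclusion
  set X : ℝ := max (Γ N) M with hXdef
  have hX0 : 0 ≤ X := le_trans hM0 (le_max_right _ _)
  have hbd2 : ∀ k, N ≤ k → ‖w (k+1)‖ ≤ ‖z‖ + Real.sqrt (2*X) := by
    intro k hk
    have h1 : ‖w (k+1) - z‖^2 ≤ 2*X := le_trans (hlow k hk) (by linarith [hΓbd k hk])
    have h2 : ‖w (k+1) - z‖ ≤ Real.sqrt (2*X) := by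
      have h3 := Real.sqrt_le_sqrt h1
      rwa [Real.sqrt_sq (norm_nonneg _)] at h3
    calc ‖w (k+1)‖ = ‖(w (k+1) - z) + z‖ := by rw [sub_add_cancel]
      _ ≤ ‖w (k+1) - z‖ + ‖z‖ := norm_add_le _ _
      _ ≤ ‖z‖ + Real.sqrt (2*X) := by linarith
  refine ⟨max ((Finset.range (N+1)).sup' (by simp) (fun n => ‖w n‖))
      (‖z‖ + Real.sqrt (2*X)), ?_⟩
  intro n
  rcases le_or_gt n N with h | h
  · exact le_max_of_le_left (Finset.le_sup' (fun m => ‖w m‖) (Finset.mem_range.mpr (show n < N+1 by omega)))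
  · obtain ⟨k, rfl⟩ : ∃ k, n = k + 1 := ⟨n - 1, by omega⟩
    exact le_max_of_le_right (hbd2 k (by omega))
end

section
/- Let H be a real Hilbert space, T : H → H, and let w_{n−1}, w_n, ŵ ∈ H, δ', δ > 0, β ∈ (0, 1/4) and ρ > 0 with (δ'/δ)·ρ ≤ 1/2 − β and δ·‖T w_n − T w_{n−1}‖ ≤ ρ·‖w_n − w_{n−1}‖. Then the quantity t_n := ‖w_n − ŵ‖² + 2δ'⟨T w_n − T w_{n−1}, ŵ − w_n⟩ + (1/2)‖w_n − w_{n−1}‖² satisfies t_n ≥ (1/2 + β)‖w_n − ŵ‖² + β‖w_n − w_{n−1}‖²; in particular t_n ≥ 0. -/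
open scoped RealInnerProductSpace

/-- Lower bound on the Lyapunov-type quantity
`t_n = ‖w_n − ŵ‖² + 2δ'⟪T w_n − T w_{n−1}, ŵ − w_n⟫ + (1/2)‖w_n − w_{n−1}‖²`. -/
theorem stmt13 {H : Type*} [NormedAddCommGroup H] [InnerProductSpace ℝ H]
    (T : H → H) (wm w wsol : H) (δ' δ β ρ : ℝ)
    (hδ' : 0 < δ') (hδ : 0 < δ) (hβ : β ∈ Set.Ioo (0 : ℝ) (1 / 4)) (hρ : 0 < ρ)
    (h1 : δ' / δ * ρ ≤ 1 / 2 - β)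
    (h2 : δ * ‖T w - T wm‖ ≤ ρ * ‖w - wm‖) :
    (1 / 2 + β) * ‖w - wsol‖ ^ 2 + β * ‖w - wm‖ ^ 2 ≤
        ‖w - wsol‖ ^ 2 + 2 * δ' * ⟪T w - T wm, wsol - w⟫ + (1 / 2) * ‖w - wm‖ ^ 2 ∧
      0 ≤ ‖w - wsol‖ ^ 2 + 2 * δ' * ⟪T w - T wm, wsol - w⟫ + (1 / 2) * ‖w - wm‖ ^ 2 := by
  obtain ⟨hβ0, hβ4⟩ := hβ
  have hcs : |⟪T w - T wm, wsol - w⟫| ≤ ‖T w - T wm‖ * ‖wsol - w‖ :=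
    abs_real_inner_le_norm _ _
  have hlow : -(‖T w - T wm‖ * ‖wsol - w‖) ≤ ⟪T w - T wm, wsol - w⟫ :=
    neg_le_of_abs_le hcs
  have hnorm : ‖wsol - w‖ = ‖w - wsol‖ := norm_sub_rev _ _
  rw [hnorm] at hlow
  have hTb : δ' * ‖T w - T wm‖ ≤ (1 / 2 - β) * ‖w - wm‖ := by
    have h3 : δ' * ‖T w - T wm‖ = (δ' / δ) * (δ * ‖T w - T wm‖) := by
      field_simp
    rw [h3]
    have h4 : (δ' / δ) * (δ * ‖T w - T wm‖) ≤ (δ' / δ) * (ρ * ‖w - wm‖) := by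
      apply mul_le_mul_of_nonneg_left h2 (by positivity)
    calc (δ' / δ) * (δ * ‖T w - T wm‖) ≤ (δ' / δ) * (ρ * ‖w - wm‖) := h4
      _ = (δ' / δ * ρ) * ‖w - wm‖ := by ring
      _ ≤ (1 / 2 - β) * ‖w - wm‖ := by
          apply mul_le_mul_of_nonneg_right h1 (norm_nonneg _)
  have hn1 : (0:ℝ) ≤ ‖T w - T wm‖ := norm_nonneg _
  have hn2 : (0:ℝ) ≤ ‖w - wsol‖ := norm_nonneg _
  have hn3 : (0:ℝ) ≤ ‖w - wm‖ := norm_nonneg _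
  constructor
  · nlinarith [sq_nonneg (‖w - wm‖ - ‖w - wsol‖), mul_le_mul_of_nonneg_right hTb hn2]
  · nlinarith [sq_nonneg (‖w - wm‖ - ‖w - wsol‖), mul_le_mul_of_nonneg_right hTb hn2,
      sq_nonneg (‖w - wsol‖), sq_nonneg (‖w - wm‖)]
end

section
/- Let H be a real Hilbert space, let T : H → H be monotone (⟨T a − T b, a − b⟩ ≥ 0 for all a, b ∈ H), let S : H → Set H be monotone (⟨â − b̂, a − b⟩ ≥ 0 whenever â ∈ S a and b̂ ∈ S b), and let ŵ ∈ H satisfy −T ŵ ∈ S ŵ. Let w_{n−1}, w_n, w_{n+1}, v̂ ∈ H, σ ∈ (0,1), δ', δ > 0, β ∈ (0, 1/4) and r > 0 be such that (δ'/δ)·r ≤ 1/2 − β, δ·‖T w_n − T w_{n−1}‖ ≤ r·‖w_n − w_{n−1}‖, and a_n − δ T w_n − δ'(1−σ)(T w_n − T w_{n−1}) − w_{n+1} ∈ δ • S(w_{n+1}), where a_n := σ v̂ + (1−σ) w_n. Then, with t_n := ‖w_n − ŵ‖² + 2δ'⟨T w_n − T w_{n−1}, ŵ − w_n⟩ + (1/2)‖w_n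 − w_{n−1}‖² and t_{n+1} := ‖w_{n+1} − ŵ‖² + 2δ⟨T w_{n+1} − T w_n, ŵ − w_{n+1}⟩ + (1/2)‖w_{n+1} − w_n‖², one has t_{n+1} ≤ (1−σ) t_n + σ‖v̂ − ŵ‖² − [1/2 − σ − (δ'/δ) r (1−σ)]‖w_{n+1} − w_n‖² − β(1−σ)‖w_n − w_{n−1}‖². -/
set_option maxHeartbeats 1000000

open scoped RealInnerProductSpace Pointwise

/-- One-step descent estimate for the forward-reflected-anchored-backward
iteration (inequality (3.13)). -/
theorem stmt14 {H : Type*} [NormedAddCommGroup H] [InnerProductSpace ℝ H]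
    (T : H → H) (S : H → Set H)
    (hTmono : ∀ a b : H, 0 ≤ ⟪T a - T b, a - b⟫)
    (hSmono : ∀ ⦃a b a' b' : H⦄, a' ∈ S a → b' ∈ S b → 0 ≤ ⟪a' - b', a - b⟫)
    (wsol : H) (hwsol : -T wsol ∈ S wsol)
    (wm w wp vhat : H) (σ δ' δ β r : ℝ)
    (hσ : σ ∈ Set.Ioo (0 : ℝ) 1) (hδ' : 0 < δ') (hδ : 0 < δ)
    (hβ : β ∈ Set.Ioo (0 : ℝ) (1 / 4)) (hr : 0 < r)
    (h1 : δ' / δ * r ≤ 1 / 2 - β)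
    (h2 : δ * ‖T w - T wm‖ ≤ r * ‖w - wm‖)
    (hinc : σ • vhat + (1 - σ) • w - δ • T w - (δ' * (1 - σ)) • (T w - T wm) - wp
      ∈ δ • S wp) :
    ‖wp - wsol‖ ^ 2 + 2 * δ * ⟪T wp - T w, wsol - wp⟫ + (1 / 2) * ‖wp - w‖ ^ 2 ≤
      (1 - σ) * (‖w - wsol‖ ^ 2 + 2 * δ' * ⟪T w - T wm, wsol - w⟫
          + (1 / 2) * ‖w - wm‖ ^ 2)
        + σ * ‖vhat - wsol‖ ^ 2
        - (1 / 2 - σ - δ' / δ * r * (1 - σ)) * ‖wp - w‖ ^ 2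
        - β * (1 - σ) * ‖w - wm‖ ^ 2 := by
  obtain ⟨hσ0, hσ1⟩ := hσ
  obtain ⟨hβ0, hβ1⟩ := hβ
  obtain ⟨s, hs, hsu⟩ := hinc
  have key1 : 0 ≤ ⟪s - (-T wsol), wp - wsol⟫ := hSmono hs hwsol
  have key2 : 0 ≤ ⟪T wp - T wsol, wp - wsol⟫ := hTmono wp wsol
  set u : H := σ • vhat + (1 - σ) • w - δ • T w - (δ' * (1 - σ)) • (T w - T wm) - wp with hu
  have fact : 0 ≤ ⟪u + δ • T wsol, wp - wsol⟫ := by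
    rw [← hsu]
    have h : δ • s + δ • T wsol = δ • (s - -T wsol) := by rw [smul_sub, smul_neg]; abel
    rw [h, real_inner_smul_left]
    exact mul_nonneg hδ.le key1
  have hsum : 0 ≤ ⟪u + δ • T wsol, wp - wsol⟫ + δ * ⟪T wp - T wsol, wp - wsol⟫ :=
    add_nonneg fact (mul_nonneg hδ.le key2)
  have hid : 2 * (⟪u + δ • T wsol, wp - wsol⟫ + δ * ⟪T wp - T wsol, wp - wsol⟫) =
      σ * ‖vhat - wsol‖ ^ 2 + (1 - σ) * ‖w - wsol‖ ^ 2 - σ * ‖vhat - wp‖ ^ 2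
        - (1 - σ) * ‖wp - w‖ ^ 2 - ‖wp - wsol‖ ^ 2
        - 2 * δ * ⟪T wp - T w, wsol - wp⟫
        - 2 * (δ' * (1 - σ)) * ⟪T w - T wm, wp - w⟫
        + 2 * (δ' * (1 - σ)) * ⟪T w - T wm, wsol - w⟫ := by
    simp only [hu, ← real_inner_self_eq_norm_sq]
    simp only [inner_add_left, inner_add_right, inner_sub_left, inner_sub_right,
      real_inner_smul_left, real_inner_smul_right, real_inner_comm]
    ring
  have hCS : -(⟪T w - T wm, wp - w⟫) ≤ ‖T w - T wm‖ * ‖wp - w‖ := by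
    have h := real_inner_le_norm (T wm - T w) (wp - w)
    rw [norm_sub_rev] at h
    have he : ⟪T wm - T w, wp - w⟫ = -⟪T w - T wm, wp - w⟫ := by
      rw [show T wm - T w = -(T w - T wm) by abel, inner_neg_left]
    linarith [he ▸ h]
  have hn1 : (0:ℝ) ≤ ‖wp - w‖ := norm_nonneg _
  have hn2 : (0:ℝ) ≤ ‖w - wm‖ := norm_nonneg _
  have hn3 : (0:ℝ) ≤ ‖T w - T wm‖ := norm_nonneg _
  have hc : 0 ≤ δ' / δ * r * (1 - σ) :=
    mul_nonneg (mul_nonneg (div_nonneg hδ'.le hδ.le) hr.le) (by linarith)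
  have hbound : 2 * (δ' * (1 - σ)) * (-(⟪T w - T wm, wp - w⟫)) ≤
      δ' / δ * r * (1 - σ) * (‖w - wm‖ ^ 2 + ‖wp - w‖ ^ 2) := by
    have h4 : ‖T w - T wm‖ * ‖wp - w‖ ≤ r / δ * (‖w - wm‖ * ‖wp - w‖) := by
      rw [div_mul_eq_mul_div, le_div_iff₀ hδ]
      nlinarith
    have h5 : 2 * (‖w - wm‖ * ‖wp - w‖) ≤ ‖w - wm‖ ^ 2 + ‖wp - w‖ ^ 2 := by
      nlinarith [sq_nonneg (‖w - wm‖ - ‖wp - w‖)]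
    have hpos : 0 ≤ δ' * (1 - σ) := mul_nonneg hδ'.le (by linarith)
    calc 2 * (δ' * (1 - σ)) * (-(⟪T w - T wm, wp - w⟫))
        ≤ 2 * (δ' * (1 - σ)) * (‖T w - T wm‖ * ‖wp - w‖) := by nlinarith
      _ ≤ 2 * (δ' * (1 - σ)) * (r / δ * (‖w - wm‖ * ‖wp - w‖)) := by nlinarith
      _ = δ' / δ * r * (1 - σ) * (2 * (‖w - wm‖ * ‖wp - w‖)) := by
          field_simp
      _ ≤ δ' / δ * r * (1 - σ) * (‖w - wm‖ ^ 2 + ‖wp - w‖ ^ 2) :=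
          mul_le_mul_of_nonneg_left h5 hc
  have hA : 0 ≤ σ * ‖vhat - wp‖ ^ 2 := mul_nonneg hσ0.le (sq_nonneg _)
  have hB : 0 ≤ (1 / 2 - β - δ' / δ * r) * ((1 - σ) * ‖w - wm‖ ^ 2) :=
    mul_nonneg (by linarith) (mul_nonneg (by linarith) (sq_nonneg _))
  linarith [hsum, hid, hbound, hA, hB]
end

section
/- Let H be a real Hilbert space, let T : H → H be monotone and L-Lipschitz continuous, and let S : H → Set H be maximal monotone. Let {w_n}, {a_n} be sequences in H, {σ_n} a sequence in (0,1), and {δ_n} a sequence of positive reals such that for all n ≥ 1 the inclusion a_n − δ_n T w_n − δ_{n−1}(1−σ_n)(T w_n − T w_{n−1}) − w_{n+1} ∈ δ_n • S(w_{n+1}) holds. Suppose δ_n → δ̄ for some δ̄ > 0, σ_n → 0, ‖w_{n+1} − w_n‖ → 0, ‖a_n − w_{n+1}‖ → 0, and some subsequence {w_{n_j}} converges weakly to w* ∈ H. Then 0 ∈ (S+T)(w*), i.e. −T w* ∈ S w*. -/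
open Filter Topology
open scoped RealInnerProductSpace Pointwise NNReal

lemma combo_norm_sq {H : Type*} [NormedAddCommGroup H] [InnerProductSpace ℝ H]
    (t : ℝ) (u v : H) :
    ‖(1-t) • u + t • v‖^2 = (1-t)*‖u‖^2 + t*‖v‖^2 - t*(1-t)*‖u-v‖^2 := by
  have h1 := norm_add_sq_real ((1-t) • u) (t • v)
  have h2 := norm_sub_sq_real u v
  have h3 : ⟪(1-t) • u, t • v⟫ = (1-t)*(t*⟪u,v⟫) := by
    rw [real_inner_smul_left, real_inner_smul_right]
  have h4 : ‖(1-t) • u‖^2 = (1-t)^2 * ‖u‖^2 := by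
    rw [norm_smul, Real.norm_eq_abs, mul_pow, sq_abs]
  have h5 : ‖t • v‖^2 = t^2 * ‖v‖^2 := by rw [norm_smul, Real.norm_eq_abs, mul_pow, sq_abs]
  rw [h1, h3, h4, h5, h2]; ring

set_option maxHeartbeats 1000000 in
theorem minty_zero {H : Type*} [NormedAddCommGroup H] [InnerProductSpace ℝ H] [CompleteSpace H]
    (S : H → Set H)
    (hSmono : ∀ ⦃a b a' b' : H⦄, a' ∈ S a → b' ∈ S b → 0 ≤ ⟪a' - b', a - b⟫)
    (hSmax : ∀ a a' : H, (∀ b b', b' ∈ S b → 0 ≤ ⟪a' - b', a - b⟫) → a' ∈ S a) :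
    ∃ y : H, -y ∈ S y := by
  classical
  set E : H → H → H → H → ℝ :=
    fun x y b b' => ⟪x,b'⟫ + ⟪b,y⟫ - ⟪b,b'⟫ + ‖x‖^2/2 + ‖y‖^2/2 with hE
  -- the graph is nonempty
  obtain ⟨b₀, b₀', hb₀⟩ : ∃ b b', b' ∈ S b := by
    by_contra h; push_neg at h
    exact h 0 0 (hSmax 0 0 fun b b' hb => absurd hb (h b b'))
  -- lower bound for members of the "epigraph"
  have hlow : ∀ x y r, (∀ b b', b' ∈ S b → E x y b b' ≤ r) →
      ⟪x,y⟫ + ‖x‖^2/2 + ‖y‖^2/2 ≤ r := by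
    intro x y r hV
    by_contra hlt; push_neg at hlt
    have hyx : y ∈ S x := by
      apply hSmax
      intro b b' hb
      have h1 := hV b b' hb
      have expand : ⟪y - b', x - b⟫ = ⟪x,y⟫ - ⟪x,b'⟫ - ⟪b,y⟫ + ⟪b,b'⟫ := by
        simp only [inner_sub_left, inner_sub_right]
        linarith [real_inner_comm y x, real_inner_comm y b, real_inner_comm b' b,
          real_inner_comm b' x]
      rw [expand]
      simp only [hE] at h1; linarith
    have h2 := hV x y hyx
    simp only [hE] at h2
    linarith
  -- upper bound at graph points
  have hself : ∀ b b', b' ∈ S b → ∀ c c', c' ∈ S c →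
      E b b' c c' ≤ ⟪b,b'⟫ + ‖b‖^2/2 + ‖b'‖^2/2 := by
    intro b b' hb c c' hc
    have h0 := hSmono hb hc
    have expand : ⟪b' - c', b - c⟫ = ⟪b,b'⟫ - ⟪b,c'⟫ - ⟪c,b'⟫ + ⟪c,c'⟫ := by
      simp only [inner_sub_left, inner_sub_right]
      linarith [real_inner_comm b' b, real_inner_comm b' c, real_inner_comm c' c,
        real_inner_comm c' b]
    simp only [hE]; rw [expand] at h0; linarith
  set A : Set ℝ := {r | ∃ x y, ∀ b b', b' ∈ S b → E x y b b' ≤ r} with hA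
  have hmemA : (⟪b₀,b₀'⟫ + ‖b₀‖^2/2 + ‖b₀'‖^2/2) ∈ A :=
    ⟨b₀, b₀', fun c c' hc => hself b₀ b₀' hb₀ c c' hc⟩
  have hbdd : BddBelow A := by
    refine ⟨0, fun r hr => ?_⟩
    obtain ⟨x, y, hV⟩ := hr
    have h1 := hlow x y r hV
    have h3 := norm_add_sq_real x y
    nlinarith [sq_nonneg (‖x + y‖)]
  set m := sInf A with hm
  have hm_le : ∀ r ∈ A, m ≤ r := fun r hr => csInf_le hbdd hr
  have happrox : ∀ n : ℕ, ∃ x y, ∀ b b', b' ∈ S b → E x y b b' ≤ m + 1/(n+1) := by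
    intro n
    have hpos : (0:ℝ) < 1/(n+1) := by positivity
    have hlt : sInf A < m + 1/(n+1) := by rw [← hm]; linarith
    obtain ⟨r, hrA, hrlt⟩ := exists_lt_of_csInf_lt ⟨_, hmemA⟩ hlt
    obtain ⟨x, y, hV⟩ := hrA
    exact ⟨x, y, fun b b' hb => (hV b b' hb).trans hrlt.le⟩
  choose xs ys hVs using happrox
  -- the approximating sequences are Cauchy
  have key : ∀ p q : ℕ, ‖xs p - xs q‖^2 + ‖ys p - ys q‖^2 ≤ 4*(1/(p+1) + 1/(q+1)) := by
    intro p q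
    have hmid : ∀ b b', b' ∈ S b →
        E ((1-(2⁻¹:ℝ)) • xs p + (2⁻¹:ℝ) • xs q) ((1-(2⁻¹:ℝ)) • ys p + (2⁻¹:ℝ) • ys q) b b'
          ≤ ((m + 1/(p+1)) + (m + 1/(q+1)))/2 - (‖xs p - xs q‖^2 + ‖ys p - ys q‖^2)/8 := by
      intro b b' hb
      have h1 := hVs p b b' hb
      have h2 := hVs q b b' hb
      have e1 := combo_norm_sq 2⁻¹ (xs p) (xs q)
      have e2 := combo_norm_sq 2⁻¹ (ys p) (ys q)
      simp only [hE] at h1 h2 ⊢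
      have l1 : ⟪(1-(2⁻¹:ℝ)) • xs p + (2⁻¹:ℝ) • xs q, b'⟫
          = (1-(2⁻¹:ℝ))*⟪xs p, b'⟫ + 2⁻¹*⟪xs q, b'⟫ := by
        rw [inner_add_left, real_inner_smul_left, real_inner_smul_left]
      have l2 : ⟪b, (1-(2⁻¹:ℝ)) • ys p + (2⁻¹:ℝ) • ys q⟫
          = (1-(2⁻¹:ℝ))*⟪b, ys p⟫ + 2⁻¹*⟪b, ys q⟫ := by
        rw [inner_add_right, real_inner_smul_right, real_inner_smul_right]
      rw [l1, l2, e1, e2]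
      linarith
    have hge : m ≤ ((m + 1/(p+1)) + (m + 1/(q+1)))/2
        - (‖xs p - xs q‖^2 + ‖ys p - ys q‖^2)/8 := hm_le _ ⟨_, _, hmid⟩
    linarith
  have hb0 : Tendsto (fun N : ℕ => Real.sqrt (8/(N+1))) atTop (𝓝 0) := by
    have h8 : Tendsto (fun N : ℕ => (8:ℝ)/(N+1)) atTop (𝓝 0) := by
      have := tendsto_one_div_add_atTop_nhds_zero_nat (𝕜 := ℝ)
      have h := this.const_mul (8:ℝ)
      simp only [mul_zero] at h
      convert h using 2 with N
      push_cast; ring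
    have h9 := (Real.continuous_sqrt.tendsto 0).comp h8
    rw [Real.sqrt_zero] at h9
    exact h9
  have hcauchy : ∀ (u : ℕ → H), (∀ p q : ℕ,
      ‖u p - u q‖^2 ≤ 4*(1/(p+1) + 1/(q+1))) → CauchySeq u := by
    intro u hu
    apply cauchySeq_of_le_tendsto_0 (fun N : ℕ => Real.sqrt (8/(N+1))) _ hb0
    intro n k N hn hk
    rw [dist_eq_norm]
    have h1 : ‖u n - u k‖^2 ≤ 8/(N+1) := by
      have hn1 : 1/((n:ℝ)+1) ≤ 1/((N:ℝ)+1) := by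
        apply one_div_le_one_div_of_le (by positivity); exact_mod_cast by omega
      have hk1 : 1/((k:ℝ)+1) ≤ 1/((N:ℝ)+1) := by
        apply one_div_le_one_div_of_le (by positivity); exact_mod_cast by omega
      calc ‖u n - u k‖^2 ≤ 4*(1/((n:ℝ)+1) + 1/((k:ℝ)+1)) := hu n k
        _ ≤ 4*(1/((N:ℝ)+1) + 1/((N:ℝ)+1)) := by linarith
        _ = 8/((N:ℝ)+1) := by ring
    calc ‖u n - u k‖ = Real.sqrt (‖u n - u k‖^2) := (Real.sqrt_sq (norm_nonneg _)).symm
      _ ≤ Real.sqrt (8/(N+1)) := Real.sqrt_le_sqrt h1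
  obtain ⟨z, hz⟩ := cauchySeq_tendsto_of_complete
    (hcauchy xs (fun p q => by have := key p q; nlinarith [sq_nonneg ‖ys p - ys q‖]))
  obtain ⟨z', hz'⟩ := cauchySeq_tendsto_of_complete
    (hcauchy ys (fun p q => by have := key p q; nlinarith [sq_nonneg ‖xs p - xs q‖]))
  -- the limit attains the infimum
  have hVzm : ∀ b b', b' ∈ S b → E z z' b b' ≤ m := by
    intro b b' hb
    have hcont : Tendsto (fun n => E (xs n) (ys n) b b') atTop (𝓝 (E z z' b b')) := by
      simp only [hE]
      exact ((((hz.inner tendsto_const_nhds).add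
        (tendsto_const_nhds.inner hz')).sub tendsto_const_nhds).add
        (((hz.norm.pow 2)).div_const 2)).add ((hz'.norm.pow 2).div_const 2)
    have hlim2 : Tendsto (fun n : ℕ => m + 1/(n+1)) atTop (𝓝 m) := by
      have := tendsto_one_div_add_atTop_nhds_zero_nat (𝕜 := ℝ)
      simpa using tendsto_const_nhds.add this
    exact le_of_tendsto_of_tendsto' hcont hlim2 (fun n => hVs n b b' hb)
  -- key variational inequality
  have hstar : ∀ b b', b' ∈ S b →
      ⟪z,z'⟫ + ‖z‖^2 + ‖z'‖^2 ≤ ⟪b,b'⟫ + ⟪z,b⟫ + ⟪z',b'⟫ := by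
    intro b b' hb
    set ab := ⟪b,b'⟫ + ‖b‖^2/2 + ‖b'‖^2/2 with hab
    set D := ‖z - b‖^2 + ‖z' - b'‖^2 with hD
    have ht : ∀ t : ℝ, 0 < t → t ≤ 1 → 0 ≤ ab - m - (1-t)/2 * D := by
      intro t ht0 ht1
      have hmem : ∀ c c', c' ∈ S c →
          E ((1-t)•z + t•b) ((1-t)•z' + t•b') c c'
            ≤ (1-t)*m + t*ab - t*(1-t)/2*D := by
        intro c c' hc
        have h1 := hVzm c c' hc
        have h2 := hself b b' hb c c' hc
        have e1 := combo_norm_sq t z b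
        have e2 := combo_norm_sq t z' b'
        simp only [hE] at h1 h2 ⊢
        have l1 : ⟪(1-t) • z + t • b, c'⟫ = (1-t)*⟪z, c'⟫ + t*⟪b, c'⟫ := by
          rw [inner_add_left, real_inner_smul_left, real_inner_smul_left]
        have l2 : ⟪c, (1-t) • z' + t • b'⟫ = (1-t)*⟪c, z'⟫ + t*⟪c, b'⟫ := by
          rw [inner_add_right, real_inner_smul_right, real_inner_smul_right]
        rw [l1, l2, e1, e2]
        have m1 := mul_le_mul_of_nonneg_left h1 (by linarith : (0:ℝ) ≤ 1 - t)
        have m2 := mul_le_mul_of_nonneg_left h2 ht0.le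
        simp only [hD, hab]
        nlinarith [m1, m2]
      have hge : m ≤ (1-t)*m + t*ab - t*(1-t)/2*D := hm_le _ ⟨_, _, hmem⟩
      have h3 : 0 ≤ t * (ab - m - (1-t)/2*D) := by nlinarith
      exact nonneg_of_mul_nonneg_right h3 ht0
    have hlim : Tendsto (fun n : ℕ => ab - m - (1-1/(n+1))/2 * D) atTop
        (𝓝 (ab - m - (1-0)/2 * D)) := by
      apply Tendsto.sub tendsto_const_nhds
      exact (((tendsto_const_nhds.sub
        tendsto_one_div_add_atTop_nhds_zero_nat)).div_const 2).mul_const D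
    have hD2 : 2⁻¹ * D ≤ ab - m := by
      have h := ge_of_tendsto' hlim (fun n => ht (1/(n+1)) (by positivity)
        (by rw [div_le_one (by positivity)]; push_cast; linarith [Nat.cast_nonneg (α := ℝ) n]))
      simpa using h
    have hlowz := hlow z z' m hVzm
    have d1 := norm_sub_sq_real z b
    have d2 := norm_sub_sq_real z' b'
    simp only [hab, hD] at hD2
    linarith
  -- conclude
  have hmem2 : -z ∈ S (-z') := by
    apply hSmax
    intro b b' hb
    have h := hstar b b' hb
    have hexp : ⟪-z - b', -z' - b⟫ = ⟪z,z'⟫ + ⟪z,b⟫ + ⟪z',b'⟫ + ⟪b,b'⟫ := by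
      simp only [inner_sub_left, inner_sub_right, inner_neg_left, inner_neg_right]
      linarith [real_inner_comm z z', real_inner_comm b' z', real_inner_comm b' b,
        real_inner_comm b' z]
    have hsq := norm_add_sq_real z z'
    rw [hexp]
    linarith [sq_nonneg ‖z + z'‖]
  have h2 := hstar (-z') (-z) hmem2
  have hc1 : ⟪(-z' : H), -z⟫ = ⟪z', z⟫ := by simp
  have hc2 : ⟪z, (-z' : H)⟫ = -⟪z, z'⟫ := by rw [inner_neg_right]
  have hc3 : ⟪z', (-z : H)⟫ = -⟪z', z⟫ := by rw [inner_neg_right]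
  rw [hc1, hc2, hc3] at h2
  have hcm := real_inner_comm z z'
  have hsq := norm_add_sq_real z z'
  have hn : ‖z + z'‖^2 ≤ 0 := by linarith
  have h4 : ‖z + z'‖ = 0 := le_antisymm (by nlinarith [norm_nonneg (z + z')]) (norm_nonneg _)
  have hz0 : z + z' = 0 := norm_eq_zero.mp h4
  refine ⟨z, ?_⟩
  rwa [show (-z' : H) = z from by rw [eq_neg_of_add_eq_zero_right hz0, neg_neg]] at hmem2

theorem minty_res {H : Type*} [NormedAddCommGroup H] [InnerProductSpace ℝ H] [CompleteSpace H]
    (S : H → Set H)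
    (hSmono : ∀ ⦃a b a' b' : H⦄, a' ∈ S a → b' ∈ S b → 0 ≤ ⟪a' - b', a - b⟫)
    (hSmax : ∀ a a' : H, (∀ b b', b' ∈ S b → 0 ≤ ⟪a' - b', a - b⟫) → a' ∈ S a)
    (μ : ℝ) (hμ : 0 < μ) (x : H) :
    ∃ y s, s ∈ S y ∧ y + μ • s = x := by
  set S' : H → Set H := fun v => μ • S (x + v) with hS'
  have hmono' : ∀ ⦃a b a' b' : H⦄, a' ∈ S' a → b' ∈ S' b → 0 ≤ ⟪a' - b', a - b⟫ := by
    intro a b a' b' ha hb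
    obtain ⟨s1, hs1, rfl⟩ := ha
    obtain ⟨s2, hs2, rfl⟩ := hb
    have h0 := hSmono hs1 hs2
    have : (x + a) - (x + b) = a - b := by abel
    rw [this] at h0
    rw [← smul_sub, real_inner_smul_left]
    exact mul_nonneg hμ.le h0
  have hmax' : ∀ a a' : H, (∀ b b', b' ∈ S' b → 0 ≤ ⟪a' - b', a - b⟫) → a' ∈ S' a := by
    intro a a' h
    have hmem : μ⁻¹ • a' ∈ S (x + a) := by
      apply hSmax
      intro c s hs
      have hc : μ • s ∈ S' (c - x) := by
        refine Set.smul_mem_smul_set ?_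
        rwa [show x + (c - x) = c by abel]
      have h1 := h (c - x) (μ • s) hc
      have h2 : μ⁻¹ • a' - s = μ⁻¹ • (a' - μ • s) := by
        rw [smul_sub, inv_smul_smul₀ hμ.ne']
      have h3 : (x + a) - c = a - (c - x) := by abel
      rw [h2, h3, real_inner_smul_left]
      exact mul_nonneg (by positivity) h1
    have h4 : a' = μ • (μ⁻¹ • a') := (smul_inv_smul₀ hμ.ne' a').symm
    rw [h4]
    exact Set.smul_mem_smul_set hmem
  obtain ⟨v, hv⟩ := minty_zero S' hmono' hmax'
  obtain ⟨s, hs, hμs⟩ := hv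
  refine ⟨x + v, s, hs, ?_⟩
  have hμs' : μ • s = -v := hμs
  rw [hμs']; abel

theorem minty_sum {H : Type*} [NormedAddCommGroup H] [InnerProductSpace ℝ H] [CompleteSpace H]
    (T : H → H) (L : ℝ) (hL : 0 < L)
    (hTlip : ∀ a b : H, ‖T a - T b‖ ≤ L * ‖a - b‖)
    (S : H → Set H)
    (hSmono : ∀ ⦃a b a' b' : H⦄, a' ∈ S a → b' ∈ S b → 0 ≤ ⟪a' - b', a - b⟫)
    (hSmax : ∀ a a' : H, (∀ b b', b' ∈ S b → 0 ≤ ⟪a' - b', a - b⟫) → a' ∈ S a)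
    (x : H) :
    ∃ y s, s ∈ S y ∧ y + (2*L)⁻¹ • (s + T y) = x := by
  set μ : ℝ := (2*L)⁻¹ with hμdef
  have hμ : 0 < μ := by positivity
  have hres := minty_res S hSmono hSmax μ hμ
  choose J Sel hSel hJeq using hres
  have hJlip : ∀ x₁ x₂, ‖J x₁ - J x₂‖ ≤ ‖x₁ - x₂‖ := by
    intro x₁ x₂
    have hmono := hSmono (hSel x₁) (hSel x₂)
    have hid : (J x₁ - J x₂) + μ • (Sel x₁ - Sel x₂) = x₁ - x₂ := by
      rw [smul_sub]
      calc J x₁ - J x₂ + (μ • Sel x₁ - μ • Sel x₂)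
          = (J x₁ + μ • Sel x₁) - (J x₂ + μ • Sel x₂) := by abel
        _ = x₁ - x₂ := by rw [hJeq x₁, hJeq x₂]
    have h1 : ‖J x₁ - J x₂‖^2 ≤ ⟪x₁ - x₂, J x₁ - J x₂⟫ := by
      rw [← hid, inner_add_left, real_inner_smul_left, real_inner_self_eq_norm_sq]
      linarith [mul_nonneg hμ.le hmono]
    have h2 := real_inner_le_norm (x₁ - x₂) (J x₁ - J x₂)
    rcases eq_or_lt_of_le (norm_nonneg (J x₁ - J x₂)) with h | h
    · rw [← h]; exact norm_nonneg _
    · nlinarith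
  set g : H → H := fun y => J (x - μ • T y) with hg
  have hcontr : ContractingWith (1/2 : ℝ≥0) g := by
    constructor
    · rw [← NNReal.coe_lt_coe]; norm_num
    · apply LipschitzWith.of_dist_le_mul
      intro y₁ y₂
      rw [dist_eq_norm, dist_eq_norm]
      have h1 : ‖g y₁ - g y₂‖ ≤ ‖(x - μ • T y₁) - (x - μ • T y₂)‖ := hJlip _ _
      have h2 : (x - μ • T y₁) - (x - μ • T y₂) = μ • (T y₂ - T y₁) := by
        rw [smul_sub]; abel
      have h3 : ‖μ • (T y₂ - T y₁)‖ = μ * ‖T y₂ - T y₁‖ := by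
        rw [norm_smul, Real.norm_eq_abs, abs_of_pos hμ]
      have h4 : ‖T y₂ - T y₁‖ ≤ L * ‖y₂ - y₁‖ := hTlip y₂ y₁
      have h5 : ‖y₂ - y₁‖ = ‖y₁ - y₂‖ := norm_sub_rev _ _
      have h6 : μ * L = 1/2 := by
        rw [hμdef]; field_simp
      have hc : ((1/2 : ℝ≥0) : ℝ) = 1/2 := by norm_num
      rw [hc]
      calc ‖g y₁ - g y₂‖ ≤ μ * ‖T y₂ - T y₁‖ := by rw [← h3, ← h2]; exact h1
        _ ≤ μ * (L * ‖y₂ - y₁‖) := by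
            exact mul_le_mul_of_nonneg_left h4 hμ.le
        _ = (1/2) * ‖y₁ - y₂‖ := by rw [h5, ← mul_assoc, h6]
  obtain ⟨y, hy, -⟩ := hcontr.exists_fixedPoint 0 (edist_ne_top _ _)
  refine ⟨y, Sel (x - μ • T y), ?_, ?_⟩
  · have := hSel (x - μ • T y)
    rwa [show J (x - μ • T y) = y from hy] at this
  · have h7 := hJeq (x - μ • T y)
    rw [show J (x - μ • T y) = y from hy] at h7
    rw [smul_add]
    have : y + (μ • Sel (x - μ • T y) + μ • T y) = (y + μ • Sel (x - μ • T y)) + μ • T y := by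
      abel
    rw [this, h7]; abel

set_option maxHeartbeats 1000000 in
/-- A weak subsequential limit of the iterates of the
forward-reflected-(anchored-)backward scheme is a zero of `S + T`. -/
theorem stmt15 {H : Type*} [NormedAddCommGroup H] [InnerProductSpace ℝ H] [CompleteSpace H]
    (T : H → H) (L : ℝ) (hL : 0 < L)
    (hTmono : ∀ a b : H, 0 ≤ ⟪T a - T b, a - b⟫)
    (hTlip : ∀ a b : H, ‖T a - T b‖ ≤ L * ‖a - b‖)
    (S : H → Set H)
    (hSmono : ∀ ⦃a b a' b' : H⦄, a' ∈ S a → b' ∈ S b → 0 ≤ ⟪a' - b', a - b⟫)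
    (hSmax : ∀ a a' : H, (∀ b b', b' ∈ S b → 0 ≤ ⟪a' - b', a - b⟫) → a' ∈ S a)
    (w a : ℕ → H) (σ δ : ℕ → ℝ)
    (hσ : ∀ n, σ n ∈ Set.Ioo (0 : ℝ) 1) (hδpos : ∀ n, 0 < δ n)
    (hinc : ∀ n, 1 ≤ n →
      a n - δ n • T (w n) - (δ (n - 1) * (1 - σ n)) • (T (w n) - T (w (n - 1))) - w (n + 1)
        ∈ δ n • S (w (n + 1)))
    (δbar : ℝ) (hδbar : 0 < δbar) (hδlim : Tendsto δ atTop (𝓝 δbar))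
    (hσ0 : Tendsto σ atTop (𝓝 0))
    (hwdiff : Tendsto (fun n => ‖w (n + 1) - w n‖) atTop (𝓝 0))
    (hawdiff : Tendsto (fun n => ‖a n - w (n + 1)‖) atTop (𝓝 0))
    (φ : ℕ → ℕ) (hφ : StrictMono φ) (wstar : H)
    (hweak : ∀ h : H, Tendsto (fun j => ⟪w (φ j), h⟫) atTop (𝓝 ⟪wstar, h⟫)) :
    -T wstar ∈ S wstar := by
  classical
  -- extract the selection from the inclusion
  have hsn : ∀ n : ℕ, 1 ≤ n → ∃ s, s ∈ S (w (n+1)) ∧ δ n • s =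
      a n - δ n • T (w n) - (δ (n-1) * (1 - σ n)) • (T (w n) - T (w (n-1))) - w (n+1) := by
    intro n hn
    obtain ⟨s, hs, hse⟩ := Set.mem_smul_set.mp (hinc n hn)
    exact ⟨s, hs, hse⟩
  set sfun : ℕ → H := fun n => if h : 1 ≤ n then (hsn n h).choose else 0 with hsfun
  have hsmem : ∀ n, 1 ≤ n → sfun n ∈ S (w (n+1)) := by
    intro n hn; simp only [hsfun, dif_pos hn]; exact (hsn n hn).choose_spec.1
  have hseq : ∀ n, 1 ≤ n → δ n • sfun n =
      a n - δ n • T (w n) - (δ (n-1) * (1 - σ n)) • (T (w n) - T (w (n-1))) - w (n+1) := by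
    intro n hn; simp only [hsfun, dif_pos hn]; exact (hsn n hn).choose_spec.2
  set e : ℕ → H := fun n => sfun n + T (w (n+1)) with he
  -- norm bound for e
  have hebnd : ∀ n, 1 ≤ n → ‖e n‖ ≤ (δ n)⁻¹ * (‖a n - w (n+1)‖
      + δ n * (L * ‖w (n+1) - w n‖)
      + (δ (n-1) * (1 - σ n)) * (L * ‖w n - w (n-1)‖)) := by
    intro n hn
    have hδn := hδpos n
    have hcoef : 0 ≤ δ (n-1) * (1 - σ n) :=
      mul_nonneg (hδpos (n-1)).le (by linarith [(hσ n).2])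
    have hde : δ n • e n = (a n - w (n+1)) + δ n • (T (w (n+1)) - T (w n))
        - (δ (n-1) * (1 - σ n)) • (T (w n) - T (w (n-1))) := by
      simp only [he]
      rw [smul_add, hseq n hn]
      simp only [smul_sub]
      abel
    have hb1 : ‖δ n • (T (w (n+1)) - T (w n))‖ ≤ δ n * (L * ‖w (n+1) - w n‖) := by
      rw [norm_smul, Real.norm_eq_abs, abs_of_pos hδn]
      exact mul_le_mul_of_nonneg_left (hTlip _ _) hδn.le
    have hb2 : ‖(δ (n-1) * (1 - σ n)) • (T (w n) - T (w (n-1)))‖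
        ≤ (δ (n-1) * (1 - σ n)) * (L * ‖w n - w (n-1)‖) := by
      rw [norm_smul, Real.norm_eq_abs, abs_of_nonneg hcoef]
      exact mul_le_mul_of_nonneg_left (hTlip _ _) hcoef
    have h1 : ‖δ n • e n‖ ≤ ‖a n - w (n+1)‖ + δ n * (L * ‖w (n+1) - w n‖)
        + (δ (n-1) * (1 - σ n)) * (L * ‖w n - w (n-1)‖) := by
      rw [hde]
      calc ‖(a n - w (n+1)) + δ n • (T (w (n+1)) - T (w n))
            - (δ (n-1) * (1 - σ n)) • (T (w n) - T (w (n-1)))‖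
          ≤ ‖(a n - w (n+1)) + δ n • (T (w (n+1)) - T (w n))‖
            + ‖(δ (n-1) * (1 - σ n)) • (T (w n) - T (w (n-1)))‖ := norm_sub_le _ _
        _ ≤ ‖a n - w (n+1)‖ + ‖δ n • (T (w (n+1)) - T (w n))‖
            + ‖(δ (n-1) * (1 - σ n)) • (T (w n) - T (w (n-1)))‖ := by
            linarith [norm_add_le (a n - w (n+1)) (δ n • (T (w (n+1)) - T (w n)))]
        _ ≤ _ := by linarith
    have h2 : ‖δ n • e n‖ = δ n * ‖e n‖ := by
      rw [norm_smul, Real.norm_eq_abs, abs_of_pos hδn]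
    rw [h2] at h1
    calc ‖e n‖ = (δ n)⁻¹ * (δ n * ‖e n‖) := by field_simp
      _ ≤ _ := mul_le_mul_of_nonneg_left h1 (by positivity)
  -- the bound tends to zero
  have hδprev : Tendsto (fun n => δ (n-1)) atTop (𝓝 δbar) :=
    hδlim.comp (tendsto_sub_atTop_nat 1)
  have hwprev : Tendsto (fun n => ‖w n - w (n-1)‖) atTop (𝓝 0) := by
    have h := hwdiff.comp (tendsto_sub_atTop_nat 1)
    apply h.congr'
    filter_upwards [eventually_ge_atTop 1] with n hn
    simp only [Function.comp_apply]
    rw [Nat.sub_add_cancel hn]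
  have hB : Tendsto (fun n => (δ n)⁻¹ * (‖a n - w (n+1)‖
      + δ n * (L * ‖w (n+1) - w n‖)
      + (δ (n-1) * (1 - σ n)) * (L * ‖w n - w (n-1)‖))) atTop
      (𝓝 (δbar⁻¹ * (0 + δbar * (L * 0) + (δbar * (1 - 0)) * (L * 0)))) := by
    exact (hδlim.inv₀ hδbar.ne').mul
      ((hawdiff.add (hδlim.mul (tendsto_const_nhds.mul hwdiff))).add
        ((hδprev.mul (tendsto_const_nhds.sub hσ0)).mul (tendsto_const_nhds.mul hwprev)))
  have hB0 : Tendsto (fun n => (δ n)⁻¹ * (‖a n - w (n+1)‖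
      + δ n * (L * ‖w (n+1) - w n‖)
      + (δ (n-1) * (1 - σ n)) * (L * ‖w n - w (n-1)‖))) atTop (𝓝 0) := by
    simpa using hB
  have he0 : Tendsto e atTop (𝓝 (0 : H)) := by
    apply squeeze_zero_norm' _ hB0
    filter_upwards [eventually_ge_atTop 1] with n hn
    exact hebnd n hn
  -- weak convergence of the shifted subsequence
  have hwd : Tendsto (fun j => ‖w (φ j + 1) - w (φ j)‖) atTop (𝓝 0) :=
    hwdiff.comp hφ.tendsto_atTop
  have hweak1 : ∀ h : H, Tendsto (fun j => ⟪w (φ j + 1), h⟫) atTop (𝓝 ⟪wstar, h⟫) := by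
    intro h
    have h1 : Tendsto (fun j => ⟪w (φ j + 1) - w (φ j), h⟫) atTop (𝓝 (0:ℝ)) := by
      have hwd2 : Tendsto (fun j => ‖w (φ j + 1) - w (φ j)‖ * ‖h‖) atTop (𝓝 0) := by
        simpa using hwd.mul_const ‖h‖
      apply squeeze_zero_norm (fun j => ?_) hwd2
      exact abs_real_inner_le_norm _ _
    have h2 := (hweak h).add h1
    rw [add_zero] at h2
    apply h2.congr
    intro j
    rw [inner_sub_left]; ring
  -- uniform boundedness of the shifted subsequence
  obtain ⟨C, hC⟩ : ∃ C, ∀ j, ‖w (φ j + 1)‖ ≤ C := by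
    have hpt : ∀ x : H, ∃ C, ∀ j : ℕ, ‖(innerSL ℝ (w (φ j + 1))) x‖ ≤ C := by
      intro x
      obtain ⟨C, hC⟩ := (hweak1 x).norm.bddAbove_range
      exact ⟨C, fun j => hC (Set.mem_range_self j)⟩
    obtain ⟨C, hC⟩ := banach_steinhaus hpt
    exact ⟨C, fun j => by have := hC j; rwa [innerSL_apply_norm] at this⟩
  have hφ1 : ∀ j, 1 ≤ j → 1 ≤ φ j := fun j hj => le_trans hj hφ.le_apply
  -- the limiting variational inequality
  have hR : ∀ b b', b' ∈ S b → 0 ≤ ⟪-T b - b', wstar - b⟫ := by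
    intro b b' hb
    have hq : ∀ j, 1 ≤ j →
        0 ≤ ⟪e (φ j), w (φ j + 1) - b⟫ + ⟪-T b - b', w (φ j + 1) - b⟫ := by
      intro j hj
      have hn := hφ1 j hj
      have hmono := hSmono (hsmem (φ j) hn) hb
      have hT := hTmono (w (φ j + 1)) b
      have hid : ⟪sfun (φ j) - b', w (φ j + 1) - b⟫
            + ⟪T (w (φ j + 1)) - T b, w (φ j + 1) - b⟫
          = ⟪e (φ j), w (φ j + 1) - b⟫ + ⟪-T b - b', w (φ j + 1) - b⟫ := by
        simp only [he, inner_sub_left, inner_add_left, inner_neg_left]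
        ring
      linarith
    have hq1 : Tendsto (fun j => ⟪e (φ j), w (φ j + 1) - b⟫) atTop (𝓝 (0:ℝ)) := by
      have he2 : Tendsto (fun j => ‖e (φ j)‖ * (C + ‖b‖)) atTop (𝓝 0) := by
        simpa using ((he0.norm.comp hφ.tendsto_atTop)).mul_const (C + ‖b‖)
      apply squeeze_zero_norm (fun j => ?_) he2
      calc ‖⟪e (φ j), w (φ j + 1) - b⟫‖ ≤ ‖e (φ j)‖ * ‖w (φ j + 1) - b‖ := by
            rw [Real.norm_eq_abs]; exact abs_real_inner_le_norm _ _
        _ ≤ ‖e (φ j)‖ * (C + ‖b‖) := by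
            apply mul_le_mul_of_nonneg_left _ (norm_nonneg _)
            exact le_trans (norm_sub_le _ _) (add_le_add_left (hC j) _)
    have hcomm : ∀ u : H, ⟪-T b - b', u - b⟫ = ⟪u, -T b - b'⟫ - ⟪b, -T b - b'⟫ := by
      intro u
      rw [inner_sub_right, real_inner_comm (-T b - b') u, real_inner_comm (-T b - b') b]
    have hq2 : Tendsto (fun j => ⟪-T b - b', w (φ j + 1) - b⟫) atTop
        (𝓝 ⟪-T b - b', wstar - b⟫) := by
      rw [hcomm wstar]
      exact ((hweak1 (-T b - b')).sub tendsto_const_nhds).congr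
        (fun j => (hcomm _).symm)
    have hfin := ge_of_tendsto (hq1.add hq2) (eventually_atTop.2 ⟨1, hq⟩)
    simpa using hfin
  -- solve the regularized inclusion at wstar and conclude
  obtain ⟨y, s, hs, hye⟩ := minty_sum T L hL hTlip S hSmono hSmax wstar
  set μ : ℝ := (2*L)⁻¹ with hμdef
  have hμ : 0 < μ := by positivity
  have h1 := hR y s hs
  have h2 : μ • (s + T y) = wstar - y := by rw [← hye]; abel
  have h4 : -T y - s = -(μ⁻¹ • (wstar - y)) := by
    rw [← h2, inv_smul_smul₀ hμ.ne']; abel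
  have h3 : ⟪-T y - s, wstar - y⟫ = -(μ⁻¹ * ‖wstar - y‖^2) := by
    rw [h4, inner_neg_left, real_inner_smul_left, real_inner_self_eq_norm_sq]
  rw [h3] at h1
  have hinv : 0 < μ⁻¹ := by positivity
  have h5 : ‖wstar - y‖^2 ≤ 0 := by nlinarith
  have h6 : wstar = y := by
    have h7 : ‖wstar - y‖ = 0 :=
      le_antisymm (by nlinarith [norm_nonneg (wstar - y)]) (norm_nonneg _)
    have := norm_eq_zero.mp h7
    rwa [sub_eq_zero] at this
  have h8 : s + T y = 0 := by
    have h9 : μ • (s + T y) = 0 := by rw [h2, h6, sub_self]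
    rcases smul_eq_zero.mp h9 with h | h
    · exact absurd h hμ.ne'
    · exact h
  have h10 : s = -T wstar := by
    rw [h6]
    have : s = -T y + (s + T y) := by abel
    rw [this, h8, add_zero]
  rw [← h10, h6]
  exact hs
end
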